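/- arXiv:1209.3082 — 5 statements merged into one kernel-verified Lean document; each statement's English description precedes it below -/
import Mathlib

section
/- For every n ≥ 1 there exists an involution Φ on the set of Type OC perfect matchings of [2n] (perfect matchings in which every arc (i,j) satisfies i ≤ n < j) such that for every such matching M and every k ≥ 1, cr_k(Φ(M)) = ne_k(M) and ne_k(Φ(M)) = cr_k(M); in particular Φ interchanges all refinements of crossing and nesting numbers. -/
/-- The set of arc endpoints of a collection of arcs. -/
def Endpoints (M : Finset (ℕ × ℕ)) : Finset ℕ := M.image Prod.fst ∪ M.image Prod.snd

/-- A partial matching of `[N] = {1,…,N}`: a set of arcs `(i,j)` with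
`1 ≤ i < j ≤ N` whose entries are pairwise disjoint. -/
def IsPartialMatching (N : ℕ) (M : Finset (ℕ × ℕ)) : Prop :=
  (∀ p ∈ M, 1 ≤ p.1 ∧ p.1 < p.2 ∧ p.2 ≤ N) ∧
  (∀ p ∈ M, ∀ q ∈ M, p ≠ q → p.1 ≠ q.1 ∧ p.1 ≠ q.2 ∧ p.2 ≠ q.1 ∧ p.2 ≠ q.2)

/-- A perfect matching of `[N]`: a partial matching whose arcs cover `{1,…,N}`. -/
def IsPerfectMatching (N : ℕ) (M : Finset (ℕ × ℕ)) : Prop :=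
  IsPartialMatching N M ∧ Endpoints M = Finset.Icc 1 N

/-- `A` is a `k`-crossing of `M`: a `k`-element subset of arcs listable as
`(i₁,j₁),…,(i_k,j_k)` with `i₁ < ⋯ < i_k < j₁ < ⋯ < j_k`. -/
def IsCrossing (k : ℕ) (M A : Finset (ℕ × ℕ)) : Prop :=
  A ⊆ M ∧ A.card = k ∧ (∀ p ∈ A, ∀ q ∈ A, p.1 < q.1 → p.2 < q.2) ∧
    (∀ p ∈ A, ∀ q ∈ A, p.1 < q.2)

/-- `A` is a `k`-nesting of `M`: a `k`-element subset of arcs listable as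
`(i₁,j₁),…,(i_k,j_k)` with `i₁ < ⋯ < i_k < j_k < ⋯ < j₁`. -/
def IsNesting (k : ℕ) (M A : Finset (ℕ × ℕ)) : Prop :=
  A ⊆ M ∧ A.card = k ∧ (∀ p ∈ A, ∀ q ∈ A, p.1 < q.1 → q.2 < p.2)

/-- `crNum k M` : the number of `k`-crossings of `M`. -/
noncomputable def crNum (k : ℕ) (M : Finset (ℕ × ℕ)) : ℕ :=
  Nat.card {A : Finset (ℕ × ℕ) // IsCrossing k M A}

/-- `neNum k M` : the number of `k`-nestings of `M`. -/
noncomputable def neNum (k : ℕ) (M : Finset (ℕ × ℕ)) : ℕ :=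
  Nat.card {A : Finset (ℕ × ℕ) // IsNesting k M A}

/-- A Type OC perfect matching of `[2n]`: every arc `(i,j)` has `i ≤ n < j`. -/
def TypeOCMatching (n : ℕ) (M : Finset (ℕ × ℕ)) : Prop :=
  IsPerfectMatching (2 * n) M ∧ ∀ p ∈ M, p.1 ≤ n ∧ n < p.2

-- auxiliary development
def refl' (n : ℕ) (p : ℕ × ℕ) : ℕ × ℕ := (p.1, 3 * n + 1 - p.2)

lemma arcBound {n : ℕ} {M : Finset (ℕ × ℕ)} (h : TypeOCMatching n M) :
    ∀ p ∈ M, 1 ≤ p.1 ∧ p.1 ≤ n ∧ n < p.2 ∧ p.2 ≤ 2 * n := by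
  intro p hp
  have h1 := h.1.1.1 p hp
  have h2 := h.2 p hp
  omega

lemma refl_refl {n : ℕ} {p : ℕ × ℕ} (hp : n < p.2 ∧ p.2 ≤ 2 * n) :
    refl' n (refl' n p) = p := by
  cases p with
  | mk a b => simp [refl']; omega

lemma image_refl_refl {n : ℕ} {M : Finset (ℕ × ℕ)}
    (h : ∀ p ∈ M, n < p.2 ∧ p.2 ≤ 2 * n) :
    (M.image (refl' n)).image (refl' n) = M := by
  rw [Finset.image_image]
  have : M.image (refl' n ∘ refl' n) = M.image id :=
    Finset.image_congr (fun p hp => refl_refl (h p hp))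
  simpa using this

lemma refl_injOn {n : ℕ} {A : Finset (ℕ × ℕ)}
    (h : ∀ p ∈ A, n < p.2 ∧ p.2 ≤ 2 * n) :
    Set.InjOn (refl' n) A := by
  intro p hp q hq hpq
  have h1 := h p hp
  have h2 := h q hq
  simp only [refl', Prod.mk.injEq] at hpq
  exact Prod.ext hpq.1 (by omega)

lemma endpoint_split {n : ℕ} {M : Finset (ℕ × ℕ)} (h : TypeOCMatching n M) :
    M.image Prod.fst = Finset.Icc 1 n ∧ M.image Prod.snd = Finset.Icc (n + 1) (2 * n) := by
  have hE : M.image Prod.fst ∪ M.image Prod.snd = Finset.Icc 1 (2 * n) := h.1.2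
  have hab := arcBound h
  have hfst : M.image Prod.fst ⊆ Finset.Icc 1 n := by
    intro x hx
    obtain ⟨p, hp, rfl⟩ := Finset.mem_image.1 hx
    have := hab p hp
    simp [Finset.mem_Icc]; omega
  have hsnd : M.image Prod.snd ⊆ Finset.Icc (n + 1) (2 * n) := by
    intro x hx
    obtain ⟨p, hp, rfl⟩ := Finset.mem_image.1 hx
    have := hab p hp
    simp [Finset.mem_Icc]; omega
  constructor
  · apply Finset.Subset.antisymm hfst
    intro x hx
    have hx' : x ∈ Finset.Icc 1 (2 * n) := by
      simp only [Finset.mem_Icc] at hx ⊢; omega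
    rw [← hE] at hx'
    rcases Finset.mem_union.1 hx' with h1 | h1
    · exact h1
    · have := hsnd h1
      simp only [Finset.mem_Icc] at hx this; omega
  · apply Finset.Subset.antisymm hsnd
    intro x hx
    have hx' : x ∈ Finset.Icc 1 (2 * n) := by
      simp only [Finset.mem_Icc] at hx ⊢; omega
    rw [← hE] at hx'
    rcases Finset.mem_union.1 hx' with h1 | h1
    · have := hfst h1
      simp only [Finset.mem_Icc] at hx this; omega
    · exact h1

lemma typeOC_image {n : ℕ} {M : Finset (ℕ × ℕ)} (h : TypeOCMatching n M) :
    TypeOCMatching n (M.image (refl' n)) := by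
  have hab := arcBound h
  refine ⟨⟨⟨?_, ?_⟩, ?_⟩, ?_⟩
  · intro p hp
    obtain ⟨q, hq, rfl⟩ := Finset.mem_image.1 hp
    have := hab q hq
    simp [refl']; omega
  · intro p hp q hq hpq
    obtain ⟨p', hp', rfl⟩ := Finset.mem_image.1 hp
    obtain ⟨q', hq', rfl⟩ := Finset.mem_image.1 hq
    have hne : p' ≠ q' := fun e => hpq (by rw [e])
    have hd := h.1.1.2 p' hp' q' hq' hne
    have h1 := hab p' hp'
    have h2 := hab q' hq'
    simp [refl']
    constructor
    · exact hd.1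
    constructor
    · omega
    constructor
    · omega
    · omega
  · -- Endpoints
    have hs := endpoint_split h
    show Endpoints _ = _
    unfold Endpoints
    have e1 : (M.image (refl' n)).image Prod.fst = M.image Prod.fst := by
      rw [Finset.image_image]; rfl
    have e2 : (M.image (refl' n)).image Prod.snd = Finset.Icc (n + 1) (2 * n) := by
      rw [Finset.image_image]
      ext m
      simp only [Finset.mem_image, Function.comp, Finset.mem_Icc]
      constructor
      · rintro ⟨p, hp, rfl⟩
        have := hab p hp
        simp [refl']; omega
      · intro hm
        have : 3 * n + 1 - m ∈ M.image Prod.snd := by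
          rw [hs.2]; simp [Finset.mem_Icc]; omega
        obtain ⟨p, hp, hpe⟩ := Finset.mem_image.1 this
        exact ⟨p, hp, by simp [refl']; omega⟩
    rw [e1, e2, hs.1]
    ext m
    simp only [Finset.mem_union, Finset.mem_Icc]
    omega
  · intro p hp
    obtain ⟨q, hq, rfl⟩ := Finset.mem_image.1 hp
    have := hab q hq
    simp [refl']; omega

lemma nest_to_cross {n k : ℕ} {M A : Finset (ℕ × ℕ)} (h : TypeOCMatching n M)
    (hA : IsNesting k M A) : IsCrossing k (M.image (refl' n)) (A.image (refl' n)) := by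
  have hab := arcBound h
  have hAb : ∀ p ∈ A, 1 ≤ p.1 ∧ p.1 ≤ n ∧ n < p.2 ∧ p.2 ≤ 2 * n :=
    fun p hp => hab p (hA.1 hp)
  refine ⟨Finset.image_subset_image hA.1, ?_, ?_, ?_⟩
  · rw [Finset.card_image_of_injOn (refl_injOn (fun p hp => by have := hAb p hp; omega))]
    exact hA.2.1
  · intro p hp q hq hlt
    obtain ⟨p', hp', rfl⟩ := Finset.mem_image.1 hp
    obtain ⟨q', hq', rfl⟩ := Finset.mem_image.1 hq
    have h1 := hAb p' hp'
    have h2 := hAb q' hq'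
    have := hA.2.2 p' hp' q' hq' hlt
    simp [refl'] at *; omega
  · intro p hp q hq
    obtain ⟨p', hp', rfl⟩ := Finset.mem_image.1 hp
    obtain ⟨q', hq', rfl⟩ := Finset.mem_image.1 hq
    have h1 := hAb p' hp'
    have h2 := hAb q' hq'
    simp [refl']; omega

lemma cross_to_nest {n k : ℕ} {M A : Finset (ℕ × ℕ)} (h : TypeOCMatching n M)
    (hA : IsCrossing k (M.image (refl' n)) A) : IsNesting k M (A.image (refl' n)) := by
  have hab := arcBound h
  have hM' := typeOC_image h
  have hab' := arcBound hM'
  have hAb : ∀ p ∈ A, 1 ≤ p.1 ∧ p.1 ≤ n ∧ n < p.2 ∧ p.2 ≤ 2 * n :=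
    fun p hp => hab' p (hA.1 hp)
  refine ⟨?_, ?_, ?_⟩
  · have : (A.image (refl' n)) ⊆ (M.image (refl' n)).image (refl' n) :=
      Finset.image_subset_image hA.1
    rwa [image_refl_refl (fun p hp => by have := hab p hp; omega)] at this
  · rw [Finset.card_image_of_injOn (refl_injOn (fun p hp => by have := hAb p hp; omega))]
    exact hA.2.1
  · intro p hp q hq hlt
    obtain ⟨p', hp', rfl⟩ := Finset.mem_image.1 hp
    obtain ⟨q', hq', rfl⟩ := Finset.mem_image.1 hq
    have h1 := hAb p' hp'
    have h2 := hAb q' hq'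
    have := hA.2.2.1 p' hp' q' hq' hlt
    simp [refl'] at *; omega

lemma cr_image_eq_ne {n k : ℕ} {M : Finset (ℕ × ℕ)} (h : TypeOCMatching n M) :
    crNum k (M.image (refl' n)) = neNum k M := by
  have hab := arcBound h
  have hab' := arcBound (typeOC_image h)
  refine (Nat.card_congr ?_).symm
  refine ⟨fun A => ⟨A.1.image (refl' n), nest_to_cross h A.2⟩,
          fun A => ⟨A.1.image (refl' n), cross_to_nest h A.2⟩, ?_, ?_⟩
  · rintro ⟨A, hA⟩
    ext : 1
    exact image_refl_refl (fun p hp => by have := hab p (hA.1 hp); omega)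
  · rintro ⟨A, hA⟩
    ext : 1
    exact image_refl_refl (fun p hp => by have := hab' p (hA.1 hp); omega)

theorem stmt1 (n : ℕ) (hn : 1 ≤ n) :
    ∃ Φ : Finset (ℕ × ℕ) → Finset (ℕ × ℕ),
      (∀ M, TypeOCMatching n M → TypeOCMatching n (Φ M)) ∧
      (∀ M, TypeOCMatching n M → Φ (Φ M) = M) ∧
      (∀ M, TypeOCMatching n M → ∀ k, 1 ≤ k →
        crNum k (Φ M) = neNum k M ∧ neNum k (Φ M) = crNum k M) := by
  refine ⟨fun M => M.image (refl' n), fun M hM => typeOC_image hM, ?_, ?_⟩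
  · intro M hM
    exact image_refl_refl (fun p hp => by have := arcBound hM p hp; omega)
  · intro M hM k _
    constructor
    · exact cr_image_eq_ne hM
    · have h2 := cr_image_eq_ne (typeOC_image hM) (k := k)
      rw [image_refl_refl (fun p hp => by have := arcBound hM p hp; omega)] at h2
      exact h2.symm
end

section
/- Let N ≥ 1 and let D ⊆ {1,…,N} be a set of 2n elements (the prescribed arc endpoints). Let 𝒮(D) be the set of partial matchings of [N] whose set of arc endpoints is exactly D and in which every opener (smaller entry of an arc) is less than every closer (larger entry of an arc) — equivalently, the arcs pair the n smallest elements of D with the n largest. Then there exists an involution Φ on 𝒮(D) (in particular Φ preserves the sets of openers, closers and fixed points) such that for every M ∈ 𝒮(D) and every k ≥ 1, cr_k(Φ(M)) = ne_k(M) and ne_k(Φ(M)) = cr_k(M). -/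
/-- The family `𝒮(D)`: partial matchings of `[N]` whose arc endpoints are exactly `D`
and in which every opener is less than every closer. -/
def OCWithEndpoints (N : ℕ) (D : Finset ℕ) (M : Finset (ℕ × ℕ)) : Prop :=
  IsPartialMatching N M ∧ Endpoints M = D ∧ ∀ p ∈ M, ∀ q ∈ M, p.1 < q.2

/-- Order-reversing involution on a finset. -/
noncomputable def revF (C : Finset ℕ) (x : ℕ) : ℕ :=
  if h : x ∈ C then
    ((C.orderIsoOfFin rfl) (Fin.rev ((C.orderIsoOfFin rfl).symm ⟨x, h⟩)) : ℕ)
  else x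

lemma revF_coe (C : Finset ℕ) (y : {a // a ∈ C}) :
    revF C (y : ℕ) = ((C.orderIsoOfFin rfl) (Fin.rev ((C.orderIsoOfFin rfl).symm y)) : ℕ) := by
  rw [revF, dif_pos y.2]

lemma revF_mem {C : Finset ℕ} {x : ℕ} (hx : x ∈ C) : revF C x ∈ C := by
  rw [revF, dif_pos hx]
  exact ((C.orderIsoOfFin rfl) _).2

lemma revF_rev {C : Finset ℕ} {x : ℕ} (hx : x ∈ C) : revF C (revF C x) = x := by
  have h1 := revF_coe C ⟨x, hx⟩
  have h2 := revF_coe C ((C.orderIsoOfFin rfl) (Fin.rev ((C.orderIsoOfFin rfl).symm ⟨x, hx⟩)))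
  simp only at h1
  rw [h1, h2, OrderIso.symm_apply_apply, Fin.rev_rev, OrderIso.apply_symm_apply]

lemma revF_lt {C : Finset ℕ} {x y : ℕ} (hx : x ∈ C) (hy : y ∈ C) (h : x < y) :
    revF C y < revF C x := by
  have h1 := revF_coe C ⟨x, hx⟩
  have h2 := revF_coe C ⟨y, hy⟩
  simp only at h1 h2
  rw [h1, h2]
  have hlt : ((C.orderIsoOfFin rfl).symm ⟨x, hx⟩) < ((C.orderIsoOfFin rfl).symm ⟨y, hy⟩) := by
    rw [OrderIso.lt_iff_lt]; exact h
  have h3 : Fin.rev ((C.orderIsoOfFin rfl).symm ⟨y, hy⟩)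
      < Fin.rev ((C.orderIsoOfFin rfl).symm ⟨x, hx⟩) := Fin.rev_lt_rev.mpr hlt
  exact_mod_cast (C.orderIsoOfFin rfl).lt_iff_lt.mpr h3

lemma revF_image (C : Finset ℕ) : C.image (revF C) = C := by
  apply Finset.Subset.antisymm
  · intro x hx
    obtain ⟨y, hy, rfl⟩ := Finset.mem_image.mp hx
    exact revF_mem hy
  · intro x hx
    exact Finset.mem_image.mpr ⟨revF C x, revF_mem hx, revF_rev hx⟩

noncomputable def arcRev (C : Finset ℕ) (p : ℕ × ℕ) : ℕ × ℕ := (p.1, revF C p.2)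

noncomputable def Phi (M : Finset (ℕ × ℕ)) : Finset (ℕ × ℕ) :=
  M.image (arcRev (M.image Prod.snd))

section Main

variable {N : ℕ} {D : Finset ℕ} {M : Finset (ℕ × ℕ)}

lemma fst_inj (h : OCWithEndpoints N D M) {p q : ℕ × ℕ}
    (hp : p ∈ M) (hq : q ∈ M) (e : p.1 = q.1) : p = q := by
  by_contra hne
  exact (h.1.2 p hp q hq hne).1 e

lemma opener_not_closer (h : OCWithEndpoints N D M) {p q : ℕ × ℕ}
    (hp : p ∈ M) (hq : q ∈ M) : p.1 ≠ q.2 := by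
  rcases eq_or_ne p q with rfl | hne
  · exact (h.1.1 p hp).2.1.ne
  · exact (h.1.2 p hp q hq hne).2.1

lemma arcRev_arcRev {p : ℕ × ℕ} (hp : p ∈ M) :
    arcRev (M.image Prod.snd) (arcRev (M.image Prod.snd) p) = p := by
  simp [arcRev, revF_rev (Finset.mem_image_of_mem Prod.snd hp)]

lemma Phi_snd_image : (Phi M).image Prod.snd = M.image Prod.snd := by
  rw [Phi, Finset.image_image]
  have : Prod.snd ∘ arcRev (M.image Prod.snd) = revF (M.image Prod.snd) ∘ Prod.snd := rfl
  rw [this, ← Finset.image_image, revF_image]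

lemma Phi_fst_image : (Phi M).image Prod.fst = M.image Prod.fst := by
  rw [Phi, Finset.image_image]
  rfl

lemma Phi_Phi (h : OCWithEndpoints N D M) : Phi (Phi M) = M := by
  rw [Phi, Phi_snd_image]
  rw [show Phi M = M.image (arcRev (M.image Prod.snd)) from rfl, Finset.image_image]
  have e1 : M.image (arcRev (M.image Prod.snd) ∘ arcRev (M.image Prod.snd)) = M.image id :=
    Finset.image_congr (fun p hp => arcRev_arcRev hp)
  rw [e1, Finset.image_id]

lemma closer_mem_D (h : OCWithEndpoints N D M) {x : ℕ} (hx : x ∈ M.image Prod.snd) :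
    x ∈ D := by
  rw [← h.2.1]
  exact Finset.mem_union_right _ hx

lemma opener_lt_closer (h : OCWithEndpoints N D M) {a c : ℕ}
    (ha : a ∈ M.image Prod.fst) (hc : c ∈ M.image Prod.snd) : a < c := by
  obtain ⟨p, hp, rfl⟩ := Finset.mem_image.mp ha
  obtain ⟨q, hq, rfl⟩ := Finset.mem_image.mp hc
  exact h.2.2 p hp q hq

lemma Phi_oc (hD : D ⊆ Finset.Icc 1 N) (h : OCWithEndpoints N D M) :
    OCWithEndpoints N D (Phi M) := by
  set C := M.image Prod.snd with hC
  have hmem : ∀ r ∈ Phi M, ∃ p ∈ M, arcRev C p = r := by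
    intro r hr
    exact Finset.mem_image.mp hr
  refine ⟨⟨?_, ?_⟩, ?_, ?_⟩
  · rintro r hr
    obtain ⟨p, hp, rfl⟩ := hmem r hr
    have h1 : p.1 ∈ M.image Prod.fst := Finset.mem_image_of_mem _ hp
    have h2 : revF C p.2 ∈ C := revF_mem (Finset.mem_image_of_mem _ hp)
    refine ⟨(h.1.1 p hp).1, opener_lt_closer h h1 h2, ?_⟩
    have := hD (closer_mem_D h h2)
    exact (Finset.mem_Icc.mp this).2
  · rintro r hr s hs hne
    obtain ⟨p, hp, rfl⟩ := hmem r hr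
    obtain ⟨q, hq, rfl⟩ := hmem s hs
    have hpq : p ≠ q := fun e => hne (by rw [e])
    have hd := h.1.2 p hp q hq hpq
    have h2p : p.2 ∈ C := Finset.mem_image_of_mem _ hp
    have h2q : q.2 ∈ C := Finset.mem_image_of_mem _ hq
    have h1p : p.1 ∈ M.image Prod.fst := Finset.mem_image_of_mem _ hp
    have h1q : q.1 ∈ M.image Prod.fst := Finset.mem_image_of_mem _ hq
    refine ⟨hd.1, ?_, ?_, ?_⟩
    · exact (opener_lt_closer h h1p (revF_mem h2q)).ne
    · exact (opener_lt_closer h h1q (revF_mem h2p)).ne'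
    · intro e
      simp only [arcRev] at e
      have e2 := congrArg (revF C) e
      rw [revF_rev h2p, revF_rev h2q] at e2
      exact hd.2.2.2 e2
  · rw [Endpoints, Phi_fst_image, Phi_snd_image, ← Endpoints, h.2.1]
  · rintro r hr s hs
    obtain ⟨p, hp, rfl⟩ := hmem r hr
    obtain ⟨q, hq, rfl⟩ := hmem s hs
    show p.1 < revF C q.2
    exact opener_lt_closer h (Finset.mem_image_of_mem Prod.fst hp)
      (revF_mem (Finset.mem_image_of_mem Prod.snd hq))

lemma cross_nest (h : OCWithEndpoints N D M) {k : ℕ} {A : Finset (ℕ × ℕ)}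
    (hA : IsNesting k M A) : IsCrossing k (Phi M) (A.image (arcRev (M.image Prod.snd))) := by
  set C := M.image Prod.snd with hC
  obtain ⟨hsub, hcard, hne⟩ := hA
  have hmemA : ∀ p ∈ A, p ∈ M := fun p hp => hsub hp
  refine ⟨?_, ?_, ?_, ?_⟩
  · intro r hr
    obtain ⟨p, hp, rfl⟩ := Finset.mem_image.mp hr
    exact Finset.mem_image_of_mem _ (hmemA p hp)
  · rw [Finset.card_image_of_injOn, hcard]
    intro p hp q hq e
    have := congrArg Prod.fst e
    exact fst_inj h (hmemA p hp) (hmemA q hq) this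
  · rintro r hr s hs hlt
    obtain ⟨p, hp, rfl⟩ := Finset.mem_image.mp hr
    obtain ⟨q, hq, rfl⟩ := Finset.mem_image.mp hs
    have h2p : p.2 ∈ C := Finset.mem_image_of_mem _ (hmemA p hp)
    have h2q : q.2 ∈ C := Finset.mem_image_of_mem _ (hmemA q hq)
    have : q.2 < p.2 := hne p hp q hq hlt
    exact revF_lt h2q h2p this
  · rintro r hr s hs
    obtain ⟨p, hp, rfl⟩ := Finset.mem_image.mp hr
    obtain ⟨q, hq, rfl⟩ := Finset.mem_image.mp hs
    show p.1 < revF C q.2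
    exact opener_lt_closer h (Finset.mem_image_of_mem Prod.fst (hmemA p hp))
      (revF_mem (Finset.mem_image_of_mem Prod.snd (hmemA q hq)))

lemma nest_cross (h : OCWithEndpoints N D M) {k : ℕ} {A : Finset (ℕ × ℕ)}
    (hA : IsCrossing k (Phi M) A) : IsNesting k M (A.image (arcRev (M.image Prod.snd))) := by
  set C := M.image Prod.snd with hC
  obtain ⟨hsub, hcard, hcr, -⟩ := hA
  have hmemA : ∀ r ∈ A, ∃ p ∈ M, arcRev C p = r := fun r hr => Finset.mem_image.mp (hsub hr)
  have hback : ∀ r ∈ A, arcRev C r ∈ M ∧ arcRev C (arcRev C r) = r := by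
    intro r hr
    obtain ⟨p, hp, rfl⟩ := hmemA r hr
    exact ⟨by rwa [arcRev_arcRev hp], by rw [arcRev_arcRev hp]⟩
  refine ⟨?_, ?_, ?_⟩
  · intro s hs
    obtain ⟨r, hr, rfl⟩ := Finset.mem_image.mp hs
    exact (hback r hr).1
  · rw [Finset.card_image_of_injOn, hcard]
    intro r hr s hs e
    rw [← (hback r hr).2, ← (hback s hs).2, e]
  · rintro s hs t ht hlt
    obtain ⟨r, hr, rfl⟩ := Finset.mem_image.mp hs
    obtain ⟨u, hu, rfl⟩ := Finset.mem_image.mp ht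
    simp only [arcRev] at hlt ⊢
    have hr2 : r.2 ∈ C := by
      rw [hC, ← Phi_snd_image]; exact Finset.mem_image_of_mem Prod.snd (hsub hr)
    have hu2 : u.2 ∈ C := by
      rw [hC, ← Phi_snd_image]; exact Finset.mem_image_of_mem Prod.snd (hsub hu)
    have hru : r.2 < u.2 := hcr r hr u hu hlt
    exact revF_lt hr2 hu2 hru

lemma arcRev_arcRev' (h : OCWithEndpoints N D M) {r : ℕ × ℕ} (hr : r ∈ Phi M) :
    arcRev (M.image Prod.snd) (arcRev (M.image Prod.snd) r) = r := by
  obtain ⟨p, hp, rfl⟩ := Finset.mem_image.mp hr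
  rw [arcRev_arcRev hp]

lemma cancel_M {A : Finset (ℕ × ℕ)} (hA : A ⊆ M) :
    (A.image (arcRev (M.image Prod.snd))).image (arcRev (M.image Prod.snd)) = A := by
  rw [Finset.image_image]
  have e1 : A.image (arcRev (M.image Prod.snd) ∘ arcRev (M.image Prod.snd)) = A.image id :=
    Finset.image_congr (fun p hp => arcRev_arcRev (hA hp))
  rw [e1, Finset.image_id]

lemma cancel_Phi (h : OCWithEndpoints N D M) {A : Finset (ℕ × ℕ)} (hA : A ⊆ Phi M) :
    (A.image (arcRev (M.image Prod.snd))).image (arcRev (M.image Prod.snd)) = A := by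
  rw [Finset.image_image]
  have e1 : A.image (arcRev (M.image Prod.snd) ∘ arcRev (M.image Prod.snd)) = A.image id :=
    Finset.image_congr (fun p hp => arcRev_arcRev' h (hA hp))
  rw [e1, Finset.image_id]

lemma cr_eq_ne (h : OCWithEndpoints N D M) (k : ℕ) : crNum k (Phi M) = neNum k M := by
  rw [crNum, neNum]
  apply Nat.card_congr
  exact ⟨fun A => ⟨A.1.image (arcRev (M.image Prod.snd)), nest_cross h A.2⟩,
    fun A => ⟨A.1.image (arcRev (M.image Prod.snd)), cross_nest h A.2⟩,
    fun A => Subtype.ext (cancel_Phi h A.2.1),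
    fun A => Subtype.ext (cancel_M A.2.1)⟩

end Main

theorem stmt3 (N n : ℕ) (hN : 1 ≤ N) (D : Finset ℕ) (hD : D ⊆ Finset.Icc 1 N)
    (hcard : D.card = 2 * n) :
    ∃ Φ : Finset (ℕ × ℕ) → Finset (ℕ × ℕ),
      (∀ M, OCWithEndpoints N D M → OCWithEndpoints N D (Φ M)) ∧
      (∀ M, OCWithEndpoints N D M → Φ (Φ M) = M) ∧
      (∀ M, OCWithEndpoints N D M →
        (Φ M).image Prod.fst = M.image Prod.fst ∧
        (Φ M).image Prod.snd = M.image Prod.snd) ∧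
      (∀ M, OCWithEndpoints N D M → ∀ k, 1 ≤ k →
        crNum k (Φ M) = neNum k M ∧ neNum k (Φ M) = crNum k M) := by
  
  refine ⟨Phi, fun M h => Phi_oc hD h, fun M h => Phi_Phi h,
    fun M h => ⟨Phi_fst_image, Phi_snd_image⟩, fun M h k hk => ?_⟩
  constructor
  · exact cr_eq_ne h k
  · have h2 := Phi_oc hD h
    have := cr_eq_ne h2 k
    rw [Phi_Phi h] at this
    exact this.symm
end

section
/- For every n and all finitely supported sequences (a_k)_{k≥2}, (b_k)_{k≥2}, (c_k)_{k≥2}, (d_k)_{k≥2} of natural numbers, the number of Type OC permutations σ of {1,…,n} with nu_k(σ) = a_k, cu_k(σ) = b_k, nl_k(σ) = c_k and cl_k(σ) = d_k for all k ≥ 2 equals the number of Type OC permutations σ of {1,…,n} with nu_k(σ) = b_k, cu_k(σ) = a_k, nl_k(σ) = d_k and cl_k(σ) = c_k for all k ≥ 2. That is, on Type OC permutations the joint distribution of all upper and lower crossing and nesting statistics is symmetric under simultaneously exchanging upper nestings with upper crossings and lower nestings with lower crossings. -/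
namespace Stmt5

variable {n : ℕ}

/-- `nu k σ` : the number of enhanced upper `k`-nestings of the permutation `σ`:
sets of `k` upper arcs with left endpoints `a₁ < ⋯ < a_k ≤ σ(a_k) < ⋯ < σ(a₁)`. -/
noncomputable def nu (k : ℕ) (σ : Equiv.Perm (Fin n)) : ℕ :=
  Nat.card {A : Finset (Fin n) // A.card = k ∧ (∀ a ∈ A, a ≤ σ a) ∧
    ∀ a ∈ A, ∀ b ∈ A, a < b → σ b < σ a}

/-- `cu k σ` : the number of enhanced upper `k`-crossings of `σ`:
sets of `k` upper arcs with left endpoints `a₁ < ⋯ < a_k ≤ σ(a₁) < ⋯ < σ(a_k)`. -/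
noncomputable def cu (k : ℕ) (σ : Equiv.Perm (Fin n)) : ℕ :=
  Nat.card {A : Finset (Fin n) // A.card = k ∧ (∀ a ∈ A, a ≤ σ a) ∧
    (∀ a ∈ A, ∀ b ∈ A, a < b → σ a < σ b) ∧ ∀ a ∈ A, ∀ b ∈ A, a ≤ σ b}

/-- `nl k σ` : the number of lower `k`-nestings of `σ`: sets of `k` lower arcs
`(σ(b), b)` forming the pattern `i₁ < ⋯ < i_k < j_k < ⋯ < j₁`. -/
noncomputable def nl (k : ℕ) (σ : Equiv.Perm (Fin n)) : ℕ :=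
  Nat.card {B : Finset (Fin n) // B.card = k ∧ (∀ b ∈ B, σ b < b) ∧
    ∀ a ∈ B, ∀ b ∈ B, σ a < σ b → b < a}

/-- `cl k σ` : the number of lower `k`-crossings of `σ`: sets of `k` lower arcs
`(σ(b), b)` forming the pattern `i₁ < ⋯ < i_k < j₁ < ⋯ < j_k`. -/
noncomputable def cl (k : ℕ) (σ : Equiv.Perm (Fin n)) : ℕ :=
  Nat.card {B : Finset (Fin n) // B.card = k ∧ (∀ b ∈ B, σ b < b) ∧
    (∀ a ∈ B, ∀ b ∈ B, σ a < σ b → a < b) ∧ ∀ a ∈ B, ∀ b ∈ B, σ a < b}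

/-- `a` is an opener of `σ`. -/
def IsOpener (σ : Equiv.Perm (Fin n)) (a : Fin n) : Prop := a < σ a ∧ a < σ.symm a

/-- `a` is a closer of `σ`. -/
def IsCloser (σ : Equiv.Perm (Fin n)) (a : Fin n) : Prop := σ a < a ∧ σ.symm a < a

/-- `a` is a fixed point or an upper transitory of `σ`. -/
def IsSpecial (σ : Equiv.Perm (Fin n)) (a : Fin n) : Prop :=
  σ a = a ∨ (σ.symm a < a ∧ a < σ a)

/-- `a` is a lower transitory of `σ`. -/
def IsLowerTransitory (σ : Equiv.Perm (Fin n)) (a : Fin n) : Prop :=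
  σ a < a ∧ a < σ.symm a

/-- `m` is a cut of `σ`: `0 < m < n` and `σ` stabilises the first `m` positions. -/
def IsCut (σ : Equiv.Perm (Fin n)) (m : ℕ) : Prop :=
  0 < m ∧ m < n ∧ ∀ i : Fin n, i.val < m → (σ i).val < m

/-- `a` and `b` lie in the same indecomposable interval of `σ` (no cut separates them). -/
def SameInterval (σ : Equiv.Perm (Fin n)) (a b : Fin n) : Prop :=
  ∀ m, IsCut σ m → (a.val < m ↔ b.val < m)

/-- `σ` is of Type OC: no lower transitory, at most one fixed point or upper
transitory in each indecomposable interval, and within each indecomposable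
interval every opener precedes every fixed point or upper transitory, which in
turn precedes every closer. -/
def TypeOC (σ : Equiv.Perm (Fin n)) : Prop :=
  (∀ a, ¬ IsLowerTransitory σ a) ∧
  (∀ a b, IsSpecial σ a → IsSpecial σ b → SameInterval σ a b → a = b) ∧
  (∀ a b, SameInterval σ a b → IsOpener σ a → IsSpecial σ b → a < b) ∧
  (∀ a b, SameInterval σ a b → IsSpecial σ a → IsCloser σ b → a < b) ∧
  (∀ a b, SameInterval σ a b → IsOpener σ a → IsCloser σ b → a < b)

end Stmt5
namespace Stmt5Aux
open Stmt5 Equiv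

variable {n : ℕ}

/-! ### Cuts and intervals -/

lemma cut_iff {σ : Perm (Fin n)} {m : ℕ} (h : IsCut σ m) (x : Fin n) :
    (σ x).val < m ↔ x.val < m := by
  constructor
  · intro hx
    set F : Finset (Fin n) := Finset.univ.filter (fun y : Fin n => y.val < m) with hF
    have himg : F.image σ ⊆ F := by
      intro y hy
      rcases Finset.mem_image.mp hy with ⟨z, hz, rfl⟩
      simp only [hF, Finset.mem_filter, Finset.mem_univ, true_and] at hz ⊢
      exact h.2.2 z hz
    have hcard : F.card ≤ (F.image σ).card :=
      le_of_eq (Finset.card_image_of_injective F σ.injective).symm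
    have heq : F.image σ = F := Finset.eq_of_subset_of_card_le himg hcard
    have hxF : σ x ∈ F.image σ := by
      rw [heq]; simp only [hF, Finset.mem_filter, Finset.mem_univ, true_and]; exact hx
    rcases Finset.mem_image.mp hxF with ⟨z, hz, hzx⟩
    have : z = x := σ.injective hzx
    subst this
    simpa only [hF, Finset.mem_filter, Finset.mem_univ, true_and] using hz
  · exact h.2.2 x

lemma si_refl (σ : Perm (Fin n)) (x : Fin n) : SameInterval σ x x := fun _ _ => Iff.rfl

lemma si_symm {σ : Perm (Fin n)} {x y : Fin n} (h : SameInterval σ x y) :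
    SameInterval σ y x := fun m hm => (h m hm).symm

lemma si_trans {σ : Perm (Fin n)} {x y z : Fin n} (h : SameInterval σ x y)
    (h' : SameInterval σ y z) : SameInterval σ x z := fun m hm => (h m hm).trans (h' m hm)

lemma si_apply (σ : Perm (Fin n)) (x : Fin n) : SameInterval σ x (σ x) :=
  fun m hm => (cut_iff hm x).symm

lemma si_symm_apply (σ : Perm (Fin n)) (x : Fin n) : SameInterval σ x (σ.symm x) := by
  have := si_apply σ (σ.symm x)
  rw [Equiv.apply_symm_apply] at this
  exact si_symm this

lemma exists_cut_of_lt {σ : Perm (Fin n)} {a b : Fin n} (hab : a < b)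
    (h : ¬ SameInterval σ a b) : ∃ m, IsCut σ m ∧ a.val < m ∧ m ≤ b.val := by
  rw [SameInterval] at h
  push_neg at h
  rcases h with ⟨m, hm, hiff⟩
  rcases hiff with ⟨h1, h2⟩ | ⟨h1, h2⟩
  · exact ⟨m, hm, h1, h2⟩
  · exact absurd hab (by rw [Fin.lt_def]; omega)

/-! ### Order-reversal on a finset -/

noncomputable def reflect (T : Finset (Fin n)) (x : Fin n) : Fin n :=
  if h : x ∈ T then ((T.orderIsoOfFin rfl) ((T.orderIsoOfFin rfl).symm ⟨x, h⟩).rev : Fin n)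
  else x

lemma reflect_spec {T : Finset (Fin n)} {x : Fin n} (h : x ∈ T) :
    reflect T x = ((T.orderIsoOfFin rfl) ((T.orderIsoOfFin rfl).symm ⟨x, h⟩).rev : Fin n) :=
  dif_pos h

lemma reflect_mem {T : Finset (Fin n)} {x : Fin n} (h : x ∈ T) : reflect T x ∈ T := by
  rw [reflect_spec h]
  exact Finset.coe_mem _

lemma reflect_reflect {T : Finset (Fin n)} {x : Fin n} (h : x ∈ T) :
    reflect T (reflect T x) = x := by
  have h2 : reflect T x ∈ T := reflect_mem h
  rw [reflect_spec h2]
  have key : (⟨reflect T x, h2⟩ : {y // y ∈ T}) =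
      (T.orderIsoOfFin rfl) ((T.orderIsoOfFin rfl).symm ⟨x, h⟩).rev :=
    Subtype.ext (reflect_spec h)
  rw [key, OrderIso.symm_apply_apply, Fin.rev_rev, OrderIso.apply_symm_apply]

lemma reflect_lt {T : Finset (Fin n)} {x y : Fin n} (hx : x ∈ T) (hy : y ∈ T)
    (hxy : x < y) : reflect T y < reflect T x := by
  rw [reflect_spec hx, reflect_spec hy]
  have h1 : (T.orderIsoOfFin rfl).symm ⟨x, hx⟩ < (T.orderIsoOfFin rfl).symm ⟨y, hy⟩ :=
    (T.orderIsoOfFin rfl).symm.strictMono (Subtype.mk_lt_mk.mpr hxy)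
  have h2 : ((T.orderIsoOfFin rfl).symm ⟨y, hy⟩).rev < ((T.orderIsoOfFin rfl).symm ⟨x, hx⟩).rev :=
    Fin.rev_lt_rev.mpr h1
  exact Subtype.coe_lt_coe.mpr ((T.orderIsoOfFin rfl).strictMono h2)

end Stmt5Aux
namespace Stmt5Aux
open Stmt5 Equiv

variable {n : ℕ}

/-! ### Cells and the reversal permutation -/

noncomputable def cell (σ : Perm (Fin n)) (x : Fin n) : Finset (Fin n) :=
  @Finset.filter _ (fun y => SameInterval σ x y ∧ (x ≤ σ x ↔ y ≤ σ y))
    (Classical.decPred _) Finset.univ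

lemma mem_cell {σ : Perm (Fin n)} {x y : Fin n} :
    y ∈ cell σ x ↔ SameInterval σ x y ∧ (x ≤ σ x ↔ y ≤ σ y) := by
  rw [cell, @Finset.mem_filter _ _ (Classical.decPred _)]
  simp only [Finset.mem_univ, true_and]

lemma self_mem_cell (σ : Perm (Fin n)) (x : Fin n) : x ∈ cell σ x :=
  mem_cell.mpr ⟨si_refl σ x, Iff.rfl⟩

lemma cell_eq {σ : Perm (Fin n)} {x y : Fin n} (h : y ∈ cell σ x) :
    cell σ y = cell σ x := by
  rw [mem_cell] at h
  ext z
  rw [mem_cell, mem_cell]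
  constructor
  · rintro ⟨h1, h2⟩
    exact ⟨si_trans h.1 h1, h.2.trans h2⟩
  · rintro ⟨h1, h2⟩
    exact ⟨si_trans (si_symm h.1) h1, h.2.symm.trans h2⟩

noncomputable def rho (σ : Perm (Fin n)) (x : Fin n) : Fin n := reflect (cell σ x) x

lemma rho_mem_cell (σ : Perm (Fin n)) (x : Fin n) : rho σ x ∈ cell σ x :=
  reflect_mem (self_mem_cell σ x)

lemma rho_si (σ : Perm (Fin n)) (x : Fin n) : SameInterval σ x (rho σ x) :=
  (mem_cell.mp (rho_mem_cell σ x)).1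

lemma rho_L (σ : Perm (Fin n)) (x : Fin n) : x ≤ σ x ↔ rho σ x ≤ σ (rho σ x) :=
  (mem_cell.mp (rho_mem_cell σ x)).2

lemma rho_invol (σ : Perm (Fin n)) : Function.Involutive (rho σ) := by
  intro x
  show reflect (cell σ (rho σ x)) (rho σ x) = x
  rw [cell_eq (rho_mem_cell σ x)]
  exact reflect_reflect (self_mem_cell σ x)

lemma rho_lt {σ : Perm (Fin n)} {x y : Fin n} (hy : y ∈ cell σ x) (hxy : x < y) :
    rho σ y < rho σ x := by
  show reflect (cell σ y) y < reflect (cell σ x) x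
  rw [cell_eq hy]
  exact reflect_lt (self_mem_cell σ x) hy hxy

lemma rho_lt_rev {σ : Perm (Fin n)} {x y : Fin n} (hy : y ∈ cell σ x)
    (h : rho σ x < rho σ y) : y < x := by
  rcases lt_trichotomy x y with h' | rfl | h'
  · exact absurd (rho_lt hy h') (not_lt.mpr (le_of_lt h))
  · exact absurd h (lt_irrefl _)
  · exact h'

noncomputable def rhoPerm (σ : Perm (Fin n)) : Perm (Fin n) :=
  Function.Involutive.toPerm (rho σ) (rho_invol σ)

noncomputable def phi (σ : Perm (Fin n)) : Perm (Fin n) := σ * rhoPerm σ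

lemma phi_apply (σ : Perm (Fin n)) (x : Fin n) : phi σ x = σ (rho σ x) := rfl

lemma phi_rho (σ : Perm (Fin n)) (x : Fin n) : phi σ (rho σ x) = σ x := by
  rw [phi_apply, rho_invol σ x]

lemma phi_symm_apply (σ : Perm (Fin n)) (x : Fin n) :
    (phi σ).symm x = rho σ (σ.symm x) := by
  rw [Equiv.symm_apply_eq, phi_rho, Equiv.apply_symm_apply]

end Stmt5Aux
namespace Stmt5Aux
open Stmt5 Equiv

variable {n : ℕ}

/-! ### Classification of vertices -/

lemma symm_fix {σ : Perm (Fin n)} {x : Fin n} (h : σ.symm x = x) : σ x = x :=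
  (σ.symm_apply_eq.mp h).symm

lemma left_class {σ : Perm (Fin n)} {x : Fin n} (h : x ≤ σ x) :
    IsOpener σ x ∨ IsSpecial σ x := by
  rcases lt_trichotomy (σ.symm x) x with h1 | h1 | h1
  · right; right
    refine ⟨h1, lt_of_le_of_ne h ?_⟩
    intro he
    exact absurd (σ.symm_apply_eq.mpr he) (ne_of_lt h1)
  · right; left
    exact (σ.symm_apply_eq.mp h1).symm
  · left
    refine ⟨lt_of_le_of_ne h ?_, h1⟩
    intro he
    exact absurd (σ.symm_apply_eq.mpr he) (ne_of_gt h1)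

lemma right_class {σ : Perm (Fin n)} {x : Fin n} (h : σ.symm x ≤ x) :
    IsSpecial σ x ∨ IsCloser σ x := by
  rcases lt_trichotomy (σ x) x with h1 | h1 | h1
  · right
    refine ⟨h1, lt_of_le_of_ne h ?_⟩
    intro he
    exact absurd (symm_fix he) (ne_of_lt h1)
  · left; left; exact h1
  · left; right
    refine ⟨lt_of_le_of_ne h ?_, h1⟩
    intro he
    exact absurd (symm_fix he) (ne_of_gt h1)

section TypeOC
variable {σ : Perm (Fin n)} (hσ : TypeOC σ)
include hσ

lemma closer_of (h : σ x < x) : IsCloser σ x := by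
  rcases lt_trichotomy (σ.symm x) x with h1 | h1 | h1
  · exact ⟨h, h1⟩
  · exact absurd (symm_fix h1) (ne_of_lt h)
  · exact absurd ⟨h, h1⟩ (hσ.1 x)

lemma opener_of (h : x < σ.symm x) : IsOpener σ x := by
  rcases lt_trichotomy (σ x) x with h1 | h1 | h1
  · exact absurd ⟨h1, h⟩ (hσ.1 x)
  · exact absurd (σ.symm_apply_eq.mpr h1.symm) (ne_of_gt h)
  · exact ⟨h1, h⟩

lemma trichotomy (x : Fin n) : IsOpener σ x ∨ IsSpecial σ x ∨ IsCloser σ x := by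
  rcases le_or_gt x (σ x) with h | h
  · rcases left_class h with h' | h'
    · exact Or.inl h'
    · exact Or.inr (Or.inl h')
  · exact Or.inr (Or.inr (closer_of hσ h))

/-- Key ordering fact: a left-type vertex precedes (weakly) any vertex whose
preimage is weakly to its left, within the same interval. -/
lemma le_of_left_right {x z : Fin n} (hxz : SameInterval σ x z)
    (hx : x ≤ σ x) (hz : σ.symm z ≤ z) : x ≤ z := by
  rcases left_class hx with hox | hsx
  · rcases right_class hz with hsz | hcz
    · exact le_of_lt (hσ.2.2.1 x z hxz hox hsz)
    · exact le_of_lt (hσ.2.2.2.2 x z hxz hox hcz)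
  · rcases right_class hz with hsz | hcz
    · exact le_of_eq (hσ.2.1 x z hsx hsz hxz)
    · exact le_of_lt (hσ.2.2.2.1 x z hxz hsx hcz)

lemma lt_of_opener_closer {x z : Fin n} (hxz : SameInterval σ x z)
    (hx : x < σ.symm x) (hz : σ z < z) : x < z :=
  hσ.2.2.2.2 x z hxz (opener_of hσ hx) (closer_of hσ hz)

lemma lt_of_left_closer {x z : Fin n} (hxz : SameInterval σ x z)
    (hx : x ≤ σ x) (hz : σ z < z) : x < z := by
  refine lt_of_le_of_ne (le_of_left_right hσ hxz hx (le_of_lt (closer_of hσ hz).2)) ?_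
  rintro rfl
  exact absurd hx (not_le.mpr hz)

/-! ### `phi` preserves the left/right classification -/

lemma le_phi_iff (x : Fin n) : x ≤ phi σ x ↔ x ≤ σ x := by
  constructor
  · intro h
    by_contra h'
    push_neg at h'
    -- x is a closer; rho x is a closer, so phi x = σ (rho x) is to the left of x
    have hr : σ (rho σ x) < rho σ x := by
      by_contra h2
      push_neg at h2
      exact absurd ((rho_L σ x).mpr h2) (not_le.mpr h')
    have h3 : phi σ x < x := by
      rw [phi_apply]
      refine lt_of_opener_closer hσ ?_ ?_ h'
      · exact si_trans (si_symm (si_apply σ (rho σ x))) (si_symm (rho_si σ x))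
      · rw [Equiv.symm_apply_apply]; exact hr
    exact absurd h (not_le.mpr h3)
  · intro h
    rw [phi_apply]
    refine le_of_left_right hσ ?_ h ?_
    · exact si_trans (rho_si σ x) (si_apply σ (rho σ x))
    · rw [Equiv.symm_apply_apply]
      exact (rho_L σ x).mp h

lemma phi_lt_iff (x : Fin n) : phi σ x < x ↔ σ x < x := by
  rw [← not_le, ← not_le, not_iff_not]
  exact le_phi_iff hσ x

/-! ### `phi` has the same cuts as `σ` -/

lemma cut_phi_of_cut {m : ℕ} (h : IsCut σ m) : IsCut (phi σ) m := by
  refine ⟨h.1, h.2.1, fun i hi => ?_⟩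
  have h1 : (rho σ i).val < m := (rho_si σ i m h).mp hi
  exact h.2.2 _ h1

lemma cut_of_cut_phi {m : ℕ} (h : IsCut (phi σ) m) : IsCut σ m := by
  refine ⟨h.1, h.2.1, fun i hi => ?_⟩
  have hr : (rho σ i).val < m := by
    rcases le_or_gt i (σ i) with hL | hC
    · -- rho i is left-type, rho i ≤ σ (rho i) = phi i < m
      have h1 : rho σ i ≤ σ (rho σ i) := (rho_L σ i).mp hL
      have h2 : (phi σ i).val < m := h.2.2 i hi
      rw [phi_apply] at h2
      calc (rho σ i).val ≤ (σ (rho σ i)).val := h1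
        _ < m := h2
    · -- i is a closer; phi (rho i) = σ i < i < m forces rho i < m
      by_contra hge
      push_neg at hge
      have h2 : ¬ (phi σ (rho σ i)).val < m := by
        intro h3
        exact absurd ((cut_iff h (rho σ i)).mp h3) (not_lt.mpr hge)
      rw [phi_rho] at h2
      exact h2 (lt_trans (Fin.lt_def.mp hC) hi)
  have h4 : (phi σ (rho σ i)).val < m := h.2.2 _ hr
  rwa [phi_rho] at h4

lemma si_phi_iff {a b : Fin n} : SameInterval (phi σ) a b ↔ SameInterval σ a b := by
  constructor
  · intro h m hm
    exact h m (cut_phi_of_cut hσ hm)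
  · intro h m hm
    exact h m (cut_of_cut_phi hσ hm)

lemma cell_phi (x : Fin n) : cell (phi σ) x = cell σ x := by
  ext y
  rw [mem_cell, mem_cell, si_phi_iff hσ, le_phi_iff hσ, le_phi_iff hσ]

lemma rho_phi : rho (phi σ) = rho σ := by
  funext x
  show reflect (cell (phi σ) x) x = reflect (cell σ x) x
  rw [cell_phi hσ]

lemma phi_phi : phi (phi σ) = σ := by
  ext x
  have h : phi (phi σ) x = σ x := by
    rw [phi_apply (phi σ) x, rho_phi hσ]
    exact phi_rho σ x
  exact congrArg Fin.val h

end TypeOC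
end Stmt5Aux
namespace Stmt5Aux
open Stmt5 Equiv

variable {n : ℕ}

/-! ### Mutual exclusivity of classes -/

lemma opener_not_special {σ : Perm (Fin n)} {x : Fin n} (h : IsOpener σ x) :
    ¬ IsSpecial σ x := by
  rintro (h1 | h1)
  · exact absurd h1 (ne_of_gt h.1)
  · exact absurd h.2 (not_lt.mpr (le_of_lt h1.1))

lemma opener_not_closer {σ : Perm (Fin n)} {x : Fin n} (h : IsOpener σ x) :
    ¬ IsCloser σ x := fun h1 => absurd h.1 (not_lt.mpr (le_of_lt h1.1))

lemma special_not_closer {σ : Perm (Fin n)} {x : Fin n} (h : IsSpecial σ x) :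
    ¬ IsCloser σ x := by
  rintro h1
  rcases h with h2 | h2
  · exact absurd h2 (ne_of_lt h1.1)
  · exact absurd h1.1 (not_lt.mpr (le_of_lt h2.2))

section TypeOC
variable {σ : Perm (Fin n)} (hσ : TypeOC σ)
include hσ

lemma phi_noLT : ∀ x, ¬ IsLowerTransitory (phi σ) x := by
  rintro x ⟨h1, h2⟩
  have hx : σ x < x := (phi_lt_iff hσ x).mp h1
  -- (phi σ).symm x = rho (σ.symm x) and σ.symm x is left-type
  have hL : σ.symm x ≤ σ (σ.symm x) := by
    rw [Equiv.apply_symm_apply]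
    exact le_of_lt (closer_of hσ hx).2
  have hmem : rho σ (σ.symm x) ≤ σ (rho σ (σ.symm x)) := (rho_L σ (σ.symm x)).mp hL
  have hsi : SameInterval σ (rho σ (σ.symm x)) x :=
    si_trans (si_symm (rho_si σ (σ.symm x))) (si_symm (si_symm_apply σ x))
  have : rho σ (σ.symm x) < x := lt_of_left_closer hσ hsi hmem hx
  rw [phi_symm_apply] at h2
  exact absurd h2 (not_lt.mpr (le_of_lt this))

lemma opener_phi {x : Fin n} (h : IsOpener σ x) : IsOpener (phi σ) x := by
  have hxL : x ≤ σ x := le_of_lt h.1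
  have hsymmC : σ (σ.symm x) < σ.symm x := by
    rw [Equiv.apply_symm_apply]; exact h.2
  constructor
  · refine lt_of_le_of_ne ((le_phi_iff hσ x).mpr hxL) ?_
    intro he
    -- phi x = x would force rho x = σ.symm x, a right-type point
    have : rho σ x = σ.symm x := by
      rw [phi_apply] at he
      exact σ.injective (by rw [Equiv.apply_symm_apply]; exact he.symm)
    have hrL : rho σ x ≤ σ (rho σ x) := (rho_L σ x).mp hxL
    rw [this] at hrL
    exact absurd hrL (not_le.mpr hsymmC)
  · rw [phi_symm_apply]
    -- σ.symm x is a closer, so rho (σ.symm x) is a closer, to the right of x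
    have hrC : σ (rho σ (σ.symm x)) < rho σ (σ.symm x) := by
      by_contra h2
      push_neg at h2
      exact absurd ((rho_L σ (σ.symm x)).mpr h2) (not_le.mpr hsymmC)
    refine lt_of_left_closer hσ ?_ hxL hrC
    exact si_trans (si_symm_apply σ x) (rho_si σ (σ.symm x))

lemma closer_phi {x : Fin n} (h : IsCloser σ x) : IsCloser (phi σ) x := by
  constructor
  · exact (phi_lt_iff hσ x).mpr h.1
  · rw [phi_symm_apply]
    have hL : σ.symm x ≤ σ (σ.symm x) := by
      rw [Equiv.apply_symm_apply]; exact le_of_lt h.2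
    refine lt_of_left_closer hσ ?_ ((rho_L σ (σ.symm x)).mp hL) h.1
    exact si_trans (si_symm (rho_si σ (σ.symm x))) (si_symm (si_symm_apply σ x))

lemma special_phi {x : Fin n} (h : IsSpecial σ x) : IsSpecial (phi σ) x := by
  have hxL : x ≤ σ x := by
    rcases h with h1 | h1
    · exact le_of_eq h1.symm
    · exact le_of_lt h1.2
  have hxR : σ.symm x ≤ x := by
    rcases h with h1 | h1
    · exact le_of_eq (σ.symm_apply_eq.mpr h1.symm)
    · exact le_of_lt h1.1
  have h1 : x ≤ phi σ x := (le_phi_iff hσ x).mpr hxL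
  have h2 : (phi σ).symm x ≤ x := by
    rw [phi_symm_apply]
    have hL : σ.symm x ≤ σ (σ.symm x) := by
      rw [Equiv.apply_symm_apply]; exact hxR
    refine le_of_left_right hσ ?_ ((rho_L σ (σ.symm x)).mp hL) ?_
    · exact si_trans (si_symm (rho_si σ (σ.symm x))) (si_symm (si_symm_apply σ x))
    · exact hxR
  rcases eq_or_lt_of_le h1 with he | hlt
  · exact Or.inl he.symm
  · right
    refine ⟨lt_of_le_of_ne h2 ?_, hlt⟩
    intro he
    have : phi σ x = x := by
      have := congrArg (phi σ) he
      rw [Equiv.apply_symm_apply] at this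
      exact this.symm
    exact absurd this (ne_of_gt hlt)

lemma opener_phi_iff {x : Fin n} : IsOpener (phi σ) x ↔ IsOpener σ x := by
  constructor
  · intro h
    rcases trichotomy hσ x with h1 | h1 | h1
    · exact h1
    · exact absurd (special_phi hσ h1) (opener_not_special h)
    · exact absurd (closer_phi hσ h1) (opener_not_closer h)
  · exact opener_phi hσ

lemma special_phi_iff {x : Fin n} : IsSpecial (phi σ) x ↔ IsSpecial σ x := by
  constructor
  · intro h
    rcases trichotomy hσ x with h1 | h1 | h1
    · exact absurd h (opener_not_special (opener_phi hσ h1))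
    · exact h1
    · exact absurd (closer_phi hσ h1) (special_not_closer h)
  · exact special_phi hσ

lemma closer_phi_iff {x : Fin n} : IsCloser (phi σ) x ↔ IsCloser σ x := by
  constructor
  · intro h
    rcases trichotomy hσ x with h1 | h1 | h1
    · exact absurd h (opener_not_closer (opener_phi hσ h1))
    · exact absurd h (special_not_closer (special_phi hσ h1))
    · exact h1
  · exact closer_phi hσ

lemma typeOC_phi : TypeOC (phi σ) := by
  refine ⟨phi_noLT hσ, ?_, ?_, ?_, ?_⟩
  · intro a b h1 h2 h3
    exact hσ.2.1 a b ((special_phi_iff hσ).mp h1) ((special_phi_iff hσ).mp h2)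
      ((si_phi_iff hσ).mp h3)
  · intro a b h1 h2 h3
    exact hσ.2.2.1 a b ((si_phi_iff hσ).mp h1) ((opener_phi_iff hσ).mp h2)
      ((special_phi_iff hσ).mp h3)
  · intro a b h1 h2 h3
    exact hσ.2.2.2.1 a b ((si_phi_iff hσ).mp h1) ((special_phi_iff hσ).mp h2)
      ((closer_phi_iff hσ).mp h3)
  · intro a b h1 h2 h3
    exact hσ.2.2.2.2 a b ((si_phi_iff hσ).mp h1) ((opener_phi_iff hσ).mp h2)
      ((closer_phi_iff hσ).mp h3)

end TypeOC
end Stmt5Aux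
namespace Stmt5Aux
open Stmt5 Equiv

variable {n : ℕ}

lemma rho_C {σ : Perm (Fin n)} {a : Fin n} (h : σ a < a) :
    σ (rho σ a) < rho σ a :=
  not_le.mp (fun h2 => absurd ((rho_L σ a).mpr h2) (not_le.mpr h))

lemma image_rho_invol (σ : Perm (Fin n)) (A : Finset (Fin n)) :
    (A.image (rho σ)).image (rho σ) = A := by
  rw [Finset.image_image]
  have h : rho σ ∘ rho σ = id := funext (rho_invol σ)
  rw [h, Finset.image_id]

section TypeOC
variable {σ : Perm (Fin n)} (hσ : TypeOC σ)
include hσ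

lemma nu_phi (k : ℕ) : nu k (phi σ) = cu k σ := by
  unfold nu cu
  apply Nat.card_congr
  refine ⟨fun A => ⟨A.1.image (rho σ), ?_⟩, fun B => ⟨B.1.image (rho σ), ?_⟩,
    fun A => Subtype.ext (image_rho_invol σ A.1), fun B => Subtype.ext (image_rho_invol σ B.1)⟩
  · obtain ⟨A, hcard, hup, hnest⟩ := A
    have hL : ∀ a ∈ A, a ≤ σ a := fun a ha => (le_phi_iff hσ a).mp (hup a ha)
    have hsame : ∀ a ∈ A, ∀ b ∈ A, a < b → SameInterval σ a b := by
      intro a ha b hb hab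
      by_contra hns
      obtain ⟨m, hm, h1, h2⟩ := exists_cut_of_lt hab hns
      have hra : (rho σ a).val < m := (rho_si σ a m hm).mp h1
      have hpa : (phi σ a).val < m := hm.2.2 _ hra
      have hrb : ¬ (rho σ b).val < m := fun h3 =>
        absurd ((rho_si σ b m hm).mpr h3) (not_lt.mpr h2)
      have hpb : ¬ (phi σ b).val < m := fun h3 => hrb ((cut_iff hm (rho σ b)).mp h3)
      have h4 : phi σ b < phi σ a := hnest a ha b hb hab
      exact hpb (lt_trans (Fin.lt_def.mp h4) hpa)
    have hsame' : ∀ a ∈ A, ∀ b ∈ A, SameInterval σ a b := by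
      intro a ha b hb
      rcases lt_trichotomy a b with h | rfl | h
      · exact hsame a ha b hb h
      · exact si_refl σ a
      · exact si_symm (hsame b hb a ha h)
    have hcell : ∀ a ∈ A, ∀ b ∈ A, b ∈ cell σ a := fun a ha b hb =>
      mem_cell.mpr ⟨hsame' a ha b hb, iff_of_true (hL a ha) (hL b hb)⟩
    refine ⟨(Finset.card_image_of_injective _ (rho_invol σ).injective).trans hcard, ?_, ?_, ?_⟩
    · intro a' ha'
      obtain ⟨a, ha, rfl⟩ := Finset.mem_image.mp ha'
      exact (rho_L σ a).mp (hL a ha)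
    · intro a' ha' b' hb' hlt
      obtain ⟨a, ha, rfl⟩ := Finset.mem_image.mp ha'
      obtain ⟨b, hb, rfl⟩ := Finset.mem_image.mp hb'
      have hba : b < a := rho_lt_rev (hcell a ha b hb) hlt
      exact hnest b hb a ha hba
    · intro a' ha' b' hb'
      obtain ⟨a, ha, rfl⟩ := Finset.mem_image.mp ha'
      obtain ⟨b, hb, rfl⟩ := Finset.mem_image.mp hb'
      refine le_of_left_right hσ ?_ ((rho_L σ a).mp (hL a ha)) ?_
      · exact si_trans (si_symm (rho_si σ a)) (si_trans (hsame' a ha b hb)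
          (si_trans (rho_si σ b) (si_apply σ (rho σ b))))
      · rw [Equiv.symm_apply_apply]
        exact (rho_L σ b).mp (hL b hb)
  · obtain ⟨B, hcard, hL, hincr, hcross⟩ := B
    have hsame : ∀ a ∈ B, ∀ b ∈ B, a < b → SameInterval σ a b := by
      intro a ha b hb hab
      by_contra hns
      obtain ⟨m, hm, h1, h2⟩ := exists_cut_of_lt hab hns
      have h3 : (σ a).val < m := hm.2.2 a h1
      have h4 : b ≤ σ a := hcross b hb a ha
      exact absurd (lt_of_le_of_lt (Fin.le_def.mp h4) h3) (not_lt.mpr h2)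
    have hsame' : ∀ a ∈ B, ∀ b ∈ B, SameInterval σ a b := by
      intro a ha b hb
      rcases lt_trichotomy a b with h | rfl | h
      · exact hsame a ha b hb h
      · exact si_refl σ a
      · exact si_symm (hsame b hb a ha h)
    have hcell : ∀ a ∈ B, ∀ b ∈ B, b ∈ cell σ a := fun a ha b hb =>
      mem_cell.mpr ⟨hsame' a ha b hb, iff_of_true (hL a ha) (hL b hb)⟩
    refine ⟨(Finset.card_image_of_injective _ (rho_invol σ).injective).trans hcard, ?_, ?_⟩
    · intro x hx
      obtain ⟨a, ha, rfl⟩ := Finset.mem_image.mp hx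
      exact (le_phi_iff hσ _).mpr ((rho_L σ a).mp (hL a ha))
    · intro x hx y hy hlt
      obtain ⟨a, ha, rfl⟩ := Finset.mem_image.mp hx
      obtain ⟨b, hb, rfl⟩ := Finset.mem_image.mp hy
      have hba : b < a := rho_lt_rev (hcell a ha b hb) hlt
      rw [phi_rho, phi_rho]
      exact hincr b hb a ha hba

lemma nl_phi (k : ℕ) : nl k (phi σ) = cl k σ := by
  unfold nl cl
  apply Nat.card_congr
  refine ⟨fun A => ⟨A.1.image (rho σ), ?_⟩, fun B => ⟨B.1.image (rho σ), ?_⟩,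
    fun A => Subtype.ext (image_rho_invol σ A.1), fun B => Subtype.ext (image_rho_invol σ B.1)⟩
  · obtain ⟨B, hcard, hdown, hnl⟩ := A
    have hC : ∀ b ∈ B, σ b < b := fun b hb => (phi_lt_iff hσ b).mp (hdown b hb)
    have hsame : ∀ a ∈ B, ∀ b ∈ B, a < b → SameInterval σ a b := by
      intro a ha b hb hab
      by_contra hns
      obtain ⟨m, hm, h1, h2⟩ := exists_cut_of_lt hab hns
      have hra : (rho σ a).val < m := (rho_si σ a m hm).mp h1
      have hpa : (phi σ a).val < m := hm.2.2 _ hra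
      have hrb : ¬ (rho σ b).val < m := fun h3 =>
        absurd ((rho_si σ b m hm).mpr h3) (not_lt.mpr h2)
      have hpb : ¬ (phi σ b).val < m := fun h3 => hrb ((cut_iff hm (rho σ b)).mp h3)
      have h4 : phi σ a < phi σ b := Fin.lt_def.mpr (lt_of_lt_of_le hpa (not_lt.mp hpb))
      exact absurd (hnl a ha b hb h4) (not_lt.mpr (le_of_lt hab))
    have hsame' : ∀ a ∈ B, ∀ b ∈ B, SameInterval σ a b := by
      intro a ha b hb
      rcases lt_trichotomy a b with h | rfl | h
      · exact hsame a ha b hb h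
      · exact si_refl σ a
      · exact si_symm (hsame b hb a ha h)
    have hcell : ∀ a ∈ B, ∀ b ∈ B, b ∈ cell σ a := fun a ha b hb =>
      mem_cell.mpr ⟨hsame' a ha b hb,
        iff_of_false (not_le.mpr (hC a ha)) (not_le.mpr (hC b hb))⟩
    refine ⟨(Finset.card_image_of_injective _ (rho_invol σ).injective).trans hcard, ?_, ?_, ?_⟩
    · intro b' hb'
      obtain ⟨b, hb, rfl⟩ := Finset.mem_image.mp hb'
      exact rho_C (hC b hb)
    · intro x hx y hy hlt
      obtain ⟨a, ha, rfl⟩ := Finset.mem_image.mp hx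
      obtain ⟨b, hb, rfl⟩ := Finset.mem_image.mp hy
      have h4 : b < a := hnl a ha b hb hlt
      exact rho_lt (hcell b hb a ha) h4
    · intro x hx y hy
      obtain ⟨a, ha, rfl⟩ := Finset.mem_image.mp hx
      obtain ⟨b, hb, rfl⟩ := Finset.mem_image.mp hy
      refine lt_of_opener_closer hσ ?_ ?_ (rho_C (hC b hb))
      · exact si_trans (si_symm (si_apply σ (rho σ a))) (si_trans (si_symm (rho_si σ a))
          (si_trans (hsame' a ha b hb) (rho_si σ b)))
      · rw [Equiv.symm_apply_apply]
        exact rho_C (hC a ha)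
  · obtain ⟨B, hcard, hC, hincr, hcl⟩ := B
    have hsame : ∀ a ∈ B, ∀ b ∈ B, a < b → SameInterval σ a b := by
      intro a ha b hb hab
      by_contra hns
      obtain ⟨m, hm, h1, h2⟩ := exists_cut_of_lt hab hns
      have h3 : σ b < a := hcl b hb a ha
      have h4 : ¬ (σ b).val < m := fun h5 =>
        absurd ((cut_iff hm b).mp h5) (not_lt.mpr h2)
      exact h4 (lt_trans (Fin.lt_def.mp h3) h1)
    have hsame' : ∀ a ∈ B, ∀ b ∈ B, SameInterval σ a b := by
      intro a ha b hb
      rcases lt_trichotomy a b with h | rfl | h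
      · exact hsame a ha b hb h
      · exact si_refl σ a
      · exact si_symm (hsame b hb a ha h)
    have hcell : ∀ a ∈ B, ∀ b ∈ B, b ∈ cell σ a := fun a ha b hb =>
      mem_cell.mpr ⟨hsame' a ha b hb,
        iff_of_false (not_le.mpr (hC a ha)) (not_le.mpr (hC b hb))⟩
    refine ⟨(Finset.card_image_of_injective _ (rho_invol σ).injective).trans hcard, ?_, ?_⟩
    · intro x hx
      obtain ⟨a, ha, rfl⟩ := Finset.mem_image.mp hx
      rw [phi_rho]
      refine lt_of_opener_closer hσ ?_ ?_ (rho_C (hC a ha))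
      · exact si_trans (si_symm (si_apply σ a)) (rho_si σ a)
      · rw [Equiv.symm_apply_apply]
        exact hC a ha
    · intro x hx y hy hlt
      obtain ⟨a, ha, rfl⟩ := Finset.mem_image.mp hx
      obtain ⟨b, hb, rfl⟩ := Finset.mem_image.mp hy
      rw [phi_rho, phi_rho] at hlt
      exact rho_lt (hcell a ha b hb) (hincr a ha b hb hlt)

lemma cu_phi (k : ℕ) : cu k (phi σ) = nu k σ := by
  conv_rhs => rw [← phi_phi hσ]
  exact (nu_phi (typeOC_phi hσ) k).symm

lemma cl_phi (k : ℕ) : cl k (phi σ) = nl k σ := by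
  conv_rhs => rw [← phi_phi hσ]
  exact (nl_phi (typeOC_phi hσ) k).symm

end TypeOC
end Stmt5Aux
theorem stmt5 (n : ℕ) (a b c d : ℕ → ℕ)
    (ha : {k | a k ≠ 0}.Finite) (hb : {k | b k ≠ 0}.Finite)
    (hc : {k | c k ≠ 0}.Finite) (hd : {k | d k ≠ 0}.Finite) :
    Nat.card {σ : Equiv.Perm (Fin n) // Stmt5.TypeOC σ ∧ ∀ k, 2 ≤ k →
      Stmt5.nu k σ = a k ∧ Stmt5.cu k σ = b k ∧
      Stmt5.nl k σ = c k ∧ Stmt5.cl k σ = d k} =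
    Nat.card {σ : Equiv.Perm (Fin n) // Stmt5.TypeOC σ ∧ ∀ k, 2 ≤ k →
      Stmt5.nu k σ = b k ∧ Stmt5.cu k σ = a k ∧
      Stmt5.nl k σ = d k ∧ Stmt5.cl k σ = c k} := by
  apply Nat.card_congr
  refine ⟨fun σ => ⟨Stmt5Aux.phi σ.1, Stmt5Aux.typeOC_phi σ.2.1, fun k hk => ?_⟩,
    fun σ => ⟨Stmt5Aux.phi σ.1, Stmt5Aux.typeOC_phi σ.2.1, fun k hk => ?_⟩,
    fun σ => Subtype.ext (Stmt5Aux.phi_phi σ.2.1), fun σ => Subtype.ext (Stmt5Aux.phi_phi σ.2.1)⟩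
  · obtain ⟨h1, h2, h3, h4⟩ := σ.2.2 k hk
    exact ⟨(Stmt5Aux.nu_phi σ.2.1 k).trans h2, (Stmt5Aux.cu_phi σ.2.1 k).trans h1,
      (Stmt5Aux.nl_phi σ.2.1 k).trans h4, (Stmt5Aux.cl_phi σ.2.1 k).trans h3⟩
  · obtain ⟨h1, h2, h3, h4⟩ := σ.2.2 k hk
    exact ⟨(Stmt5Aux.nu_phi σ.2.1 k).trans h2, (Stmt5Aux.cu_phi σ.2.1 k).trans h1,
      (Stmt5Aux.nl_phi σ.2.1 k).trans h4, (Stmt5Aux.cl_phi σ.2.1 k).trans h3⟩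
end

section
/- For all integers n ≥ 1 and l ≥ 0, the number of partial matchings of [2n+l] with exactly n arcs (hence l fixed points) such that every opener is less than every closer and both vertex 1 and vertex 2n+l are arc endpoints (equivalently, indecomposable Type OC partial matchings with n arcs and l fixed points) equals n! · binom(2n−2+l, l). -/
open Finset

namespace Stmt6Aux

def lo (n : ℕ) (k : Fin n) : Fin (2*n) := ⟨k, by have := k.2; omega⟩
def hi (n : ℕ) (k : Fin n) : Fin (2*n) := ⟨n + k, by have := k.2; omega⟩

@[simp] lemma lo_val (n : ℕ) (k : Fin n) : (lo n k : ℕ) = k := rfl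
@[simp] lemma hi_val (n : ℕ) (k : Fin n) : (hi n k : ℕ) = n + k := rfl

def mkM (n : ℕ) (E : Finset ℕ) (hE : E.card = 2*n) (σ : Equiv.Perm (Fin n)) :
    Finset (ℕ × ℕ) :=
  Finset.image
    (fun k => (E.orderEmbOfFin hE (lo n k), E.orderEmbOfFin hE (hi n (σ k))))
    Finset.univ

lemma mem_mkM {n : ℕ} {E : Finset ℕ} {hE : E.card = 2*n} {σ : Equiv.Perm (Fin n)}
    {p : ℕ × ℕ} :
    p ∈ mkM n E hE σ ↔
      ∃ k : Fin n, p = (E.orderEmbOfFin hE (lo n k), E.orderEmbOfFin hE (hi n (σ k))) := by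
  simp [mkM, eq_comm]

lemma endpoints_mkM {n : ℕ} {E : Finset ℕ} (hE : E.card = 2*n) (σ : Equiv.Perm (Fin n)) :
    Endpoints (mkM n E hE σ) = E := by
  set e := E.orderEmbOfFin hE with he
  apply Finset.Subset.antisymm
  · intro x hx
    rcases Finset.mem_union.mp hx with hx | hx <;>
    · obtain ⟨p, hp, rfl⟩ := Finset.mem_image.mp hx
      obtain ⟨k, rfl⟩ := mem_mkM.mp hp
      exact Finset.orderEmbOfFin_mem ..
  · intro x hx
    have hr : x ∈ Set.range e := by rw [he, Finset.range_orderEmbOfFin]; exact hx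
    obtain ⟨i, rfl⟩ := hr
    by_cases hin : (i : ℕ) < n
    · refine Finset.mem_union_left _ (Finset.mem_image.mpr
        ⟨(e (lo n ⟨i, hin⟩), e (hi n (σ ⟨i, hin⟩))), mem_mkM.mpr ⟨_, rfl⟩, ?_⟩)
      show e (lo n ⟨i, hin⟩) = e i
      exact congrArg e (Fin.ext rfl)
    · have hni : n ≤ (i : ℕ) := le_of_not_gt hin
      have hin2 := i.2
      set m : Fin n := ⟨i - n, by omega⟩ with hmdef
      have hm : hi n m = i := Fin.ext (show n + ((i : ℕ) - n) = (i : ℕ) by omega)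
      refine Finset.mem_union_right _ (Finset.mem_image.mpr
        ⟨(e (lo n (σ.symm m)), e (hi n (σ (σ.symm m)))), mem_mkM.mpr ⟨_, rfl⟩, ?_⟩)
      show e (hi n (σ (σ.symm m))) = e i
      rw [Equiv.apply_symm_apply, hm]


lemma lo_lt_hi {n : ℕ} (k m : Fin n) : lo n k < hi n m := by
  rw [Fin.lt_def]
  have := k.2
  simp; omega

lemma card_mkM {n : ℕ} {E : Finset ℕ} (hE : E.card = 2*n) (σ : Equiv.Perm (Fin n)) :
    (mkM n E hE σ).card = n := by
  rw [mkM, Finset.card_image_of_injective _ ?_, Finset.card_univ, Fintype.card_fin]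
  intro k m hkm
  have h1 := congrArg Prod.fst hkm
  simp only at h1
  have := (E.orderEmbOfFin hE).injective h1
  exact Fin.ext (show (k:ℕ) = (m:ℕ) from congrArg (fun x : Fin (2*n) => (x:ℕ)) this)

lemma mkM_spec {n l : ℕ} (hn : 1 ≤ n) {F : Finset ℕ}
    (hF : F ⊆ Finset.Icc 2 (2*n+l-1)) (hFc : F.card = l)
    (hE : (Finset.Icc 1 (2*n+l) \ F).card = 2*n) (σ : Equiv.Perm (Fin n)) :
    IsPartialMatching (2*n+l) (mkM n _ hE σ) ∧ (mkM n _ hE σ).card = n ∧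
    (∀ p ∈ mkM n _ hE σ, ∀ q ∈ mkM n _ hE σ, p.1 < q.2) ∧
    1 ∈ Endpoints (mkM n _ hE σ) ∧ (2*n+l) ∈ Endpoints (mkM n _ hE σ) := by
  set E := Finset.Icc 1 (2*n+l) \ F with hEdef
  set e := E.orderEmbOfFin hE with he
  have hmem : ∀ i, 1 ≤ e i ∧ e i ≤ 2*n+l := by
    intro i
    have := (Finset.mem_sdiff.mp (Finset.orderEmbOfFin_mem E hE i)).1
    exact Finset.mem_Icc.mp this
  have hinj : Function.Injective e := (E.orderEmbOfFin hE).injective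
  have hmono : StrictMono e := (E.orderEmbOfFin hE).strictMono
  refine ⟨⟨?_, ?_⟩, card_mkM hE σ, ?_, ?_, ?_⟩
  · rintro p hp
    obtain ⟨k, rfl⟩ := mem_mkM.mp hp
    exact ⟨(hmem _).1, hmono (lo_lt_hi _ _), (hmem _).2⟩
  · rintro p hp q hq hpq
    obtain ⟨k, rfl⟩ := mem_mkM.mp hp
    obtain ⟨m, rfl⟩ := mem_mkM.mp hq
    have hkm : k ≠ m := by rintro rfl; exact hpq rfl
    have h1 : lo n k ≠ lo n m := fun h => hkm (Fin.ext (show (k:ℕ) = (m:ℕ) from congrArg (fun x : Fin (2*n) => (x:ℕ)) h))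
    have h2 : σ k ≠ σ m := fun h => hkm (σ.injective h)
    have h3 : hi n (σ k) ≠ hi n (σ m) := by
      intro h
      exact h2 (Fin.ext (by have := congrArg Fin.val h; simpa using this))
    refine ⟨fun h => h1 (hinj h), ?_, ?_, fun h => h3 (hinj h)⟩
    · exact ne_of_lt (hmono (lo_lt_hi _ _))
    · exact (ne_of_lt (hmono (lo_lt_hi _ _))).symm
  · rintro p hp q hq
    obtain ⟨k, rfl⟩ := mem_mkM.mp hp
    obtain ⟨m, rfl⟩ := mem_mkM.mp hq
    exact hmono (lo_lt_hi _ _)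
  · have h1E : 1 ∈ E := by
      rw [hEdef, Finset.mem_sdiff]
      refine ⟨Finset.mem_Icc.mpr ⟨le_refl _, by omega⟩, fun h => ?_⟩
      have := Finset.mem_Icc.mp (hF h)
      omega
    have hz : 0 < 2*n := by omega
    have hmin : e ⟨0, hz⟩ = 1 := by
      rw [he, Finset.orderEmbOfFin_zero hE hz]
      refine le_antisymm (Finset.min'_le _ _ h1E) ?_
      have := (Finset.mem_sdiff.mp (E.min'_mem ⟨1, h1E⟩)).1
      exact (Finset.mem_Icc.mp this).1
    have hlo : lo n ⟨0, hn⟩ = ⟨0, hz⟩ := Fin.ext rfl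
    refine Finset.mem_union_left _ (Finset.mem_image.mpr
      ⟨_, mem_mkM.mpr ⟨⟨0, hn⟩, rfl⟩, ?_⟩)
    show e (lo n ⟨0, hn⟩) = 1
    rw [hlo, hmin]
  · have hNE : (2*n+l) ∈ E := by
      rw [hEdef, Finset.mem_sdiff]
      refine ⟨Finset.mem_Icc.mpr ⟨by omega, le_refl _⟩, fun h => ?_⟩
      have := Finset.mem_Icc.mp (hF h)
      omega
    have hz : 0 < 2*n := by omega
    have hmax : e ⟨2*n-1, by omega⟩ = 2*n+l := by
      rw [he]
      have : (⟨2*n-1, by omega⟩ : Fin (2*n)) = ⟨2*n-1, Nat.sub_lt hz (Nat.succ_pos 0)⟩ := rfl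
      rw [this, Finset.orderEmbOfFin_last hE hz]
      refine le_antisymm ?_ (Finset.le_max' _ _ hNE)
      have := (Finset.mem_sdiff.mp (E.max'_mem ⟨_, hNE⟩)).1
      exact (Finset.mem_Icc.mp this).2
    set m : Fin n := ⟨n-1, by omega⟩ with hmdef
    have hm : hi n m = ⟨2*n-1, by omega⟩ := Fin.ext (show n + (n-1) = 2*n-1 by omega)
    refine Finset.mem_union_right _ (Finset.mem_image.mpr
      ⟨_, mem_mkM.mpr ⟨σ.symm m, rfl⟩, ?_⟩)
    show e (hi n (σ (σ.symm m))) = 2*n+l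
    rw [Equiv.apply_symm_apply, hm, hmax]


lemma exists_rep {n l : ℕ} (hn : 1 ≤ n) {M : Finset (ℕ × ℕ)}
    (hM1 : IsPartialMatching (2*n+l) M) (hMc : M.card = n)
    (hOC : ∀ p ∈ M, ∀ q ∈ M, p.1 < q.2)
    (h1e : 1 ∈ Endpoints M) (hNe : (2*n+l) ∈ Endpoints M) :
    ∃ (F : Finset ℕ) (σ : Equiv.Perm (Fin n))
      (hE : (Finset.Icc 1 (2*n+l) \ F).card = 2*n),
      F ⊆ Finset.Icc 2 (2*n+l-1) ∧ F.card = l ∧ mkM n _ hE σ = M := by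
  classical
  obtain ⟨hb, hd⟩ := hM1
  set O := M.image Prod.fst with hOdef
  set C := M.image Prod.snd with hCdef
  have hEp : Endpoints M = O ∪ C := rfl
  have hfstinj : ∀ p ∈ M, ∀ q ∈ M, p.1 = q.1 → p = q := by
    intro p hp q hq h
    by_contra hne
    exact (hd p hp q hq hne).1 h
  have hsndinj : ∀ p ∈ M, ∀ q ∈ M, p.2 = q.2 → p = q := by
    intro p hp q hq h
    by_contra hne
    exact (hd p hp q hq hne).2.2.2 h
  have hOcard : O.card = n := by
    rw [hOdef, Finset.card_image_of_injOn, hMc]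
    intro p hp q hq h
    exact hfstinj p hp q hq h
  have hCcard : C.card = n := by
    rw [hCdef, Finset.card_image_of_injOn, hMc]
    intro p hp q hq h
    exact hsndinj p hp q hq h
  have hdisj : Disjoint O C := by
    rw [Finset.disjoint_left]
    intro x hxO hxC
    obtain ⟨p, hp, rfl⟩ := Finset.mem_image.mp hxO
    obtain ⟨q, hq, hq2⟩ := Finset.mem_image.mp hxC
    by_cases hpq : p = q
    · subst hpq
      have := (hb p hp).2.1
      omega
    · exact (hd p hp q hq hpq).2.1 hq2.symm
  have hEpcard : (Endpoints M).card = 2*n := by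
    rw [hEp, Finset.card_union_of_disjoint hdisj, hOcard, hCcard]
    omega
  have hEpsub : Endpoints M ⊆ Finset.Icc 1 (2*n+l) := by
    intro x hx
    rcases Finset.mem_union.mp hx with hx | hx
    · obtain ⟨p, hp, rfl⟩ := Finset.mem_image.mp hx
      have := hb p hp
      exact Finset.mem_Icc.mpr ⟨this.1, by omega⟩
    · obtain ⟨p, hp, rfl⟩ := Finset.mem_image.mp hx
      have := hb p hp
      exact Finset.mem_Icc.mpr ⟨by omega, this.2.2⟩
  set F := Finset.Icc 1 (2*n+l) \ Endpoints M with hFdef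
  have hFsub : F ⊆ Finset.Icc 2 (2*n+l-1) := by
    intro x hx
    obtain ⟨hx1, hx2⟩ := Finset.mem_sdiff.mp hx
    have hx3 := Finset.mem_Icc.mp hx1
    have hne1 : x ≠ 1 := fun h => hx2 (h ▸ h1e)
    have hneN : x ≠ 2*n+l := fun h => hx2 (h ▸ hNe)
    exact Finset.mem_Icc.mpr ⟨by omega, by omega⟩
  have hFc : F.card = l := by
    rw [hFdef, Finset.card_sdiff_of_subset hEpsub, Nat.card_Icc, hEpcard]
    omega
  have hE' : Finset.Icc 1 (2*n+l) \ F = Endpoints M := by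
    rw [hFdef, Finset.sdiff_sdiff_self_left, Finset.inter_eq_right.mpr hEpsub]
  have hE : (Finset.Icc 1 (2*n+l) \ F).card = 2*n := by rw [hE', hEpcard]
  set e := (Finset.Icc 1 (2*n+l) \ F).orderEmbOfFin hE with he
  have hinj : Function.Injective e := ((Finset.Icc 1 (2*n+l) \ F).orderEmbOfFin hE).injective
  have hmono : StrictMono e := ((Finset.Icc 1 (2*n+l) \ F).orderEmbOfFin hE).strictMono
  have hemem : ∀ i, e i ∈ Endpoints M := by
    intro i
    exact (Finset.ext_iff.mp hE' _).mp (Finset.orderEmbOfFin_mem _ hE i)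
  have hrange : ∀ x ∈ Endpoints M, ∃ i, e i = x := by
    intro x hx
    have : x ∈ Set.range e := by
      rw [he, Finset.range_orderEmbOfFin]
      exact_mod_cast (Finset.ext_iff.mp hE' x).mpr hx
    exact this
  have horder : ∀ i j : Fin (2*n), e i ∈ O → e j ∈ C → i < j := by
    intro i j hi hj
    obtain ⟨p, hp, hp1⟩ := Finset.mem_image.mp hi
    obtain ⟨q, hq, hq2⟩ := Finset.mem_image.mp hj
    have : e i < e j := by
      rw [← hp1, ← hq2]
      exact hOC p hp q hq
    exact hmono.lt_iff_lt.mp this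
  have hcover : ∀ i, e i ∈ O ∨ e i ∈ C := by
    intro i
    have := hemem i
    rw [hEp] at this
    exact Finset.mem_union.mp this
  set I := Finset.univ.filter (fun i : Fin (2*n) => e i ∈ O) with hIdef
  have hOI : O = I.image e := by
    apply Finset.Subset.antisymm
    · intro x hx
      obtain ⟨i, rfl⟩ := hrange x (Finset.mem_union_left _ hx)
      exact Finset.mem_image.mpr ⟨i, Finset.mem_filter.mpr ⟨Finset.mem_univ _, hx⟩, rfl⟩
    · rintro x hx
      obtain ⟨i, hi, rfl⟩ := Finset.mem_image.mp hx
      exact (Finset.mem_filter.mp hi).2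
  have hIcard : I.card = n := by
    have h1 : (I.image e).card = I.card := Finset.card_image_of_injective _ hinj
    rw [← hOI] at h1
    omega
  have hkey : ∀ i : Fin (2*n), (e i ∈ O ↔ (i : ℕ) < n) := by
    intro i
    constructor
    · intro hiO
      have hsub : Finset.Iic i ⊆ I := by
        intro j hj
        have hji : j ≤ i := Finset.mem_Iic.mp hj
        rcases hcover j with h | h
        · exact Finset.mem_filter.mpr ⟨Finset.mem_univ _, h⟩
        · exact absurd hji (not_le_of_gt (horder i j hiO h))
      have := Finset.card_le_card hsub
      rw [Fin.card_Iic, hIcard] at this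
      omega
    · intro hiN
      by_contra hiO
      have hiC : e i ∈ C := (hcover i).resolve_left hiO
      have hsub : I ⊆ Finset.Iio i := by
        intro j hj
        exact Finset.mem_Iio.mpr (horder j i (Finset.mem_filter.mp hj).2 hiC)
      have := Finset.card_le_card hsub
      rw [hIcard, Fin.card_Iio] at this
      have := i.2
      omega
  have hchoice : ∀ k : Fin n, ∃ m : Fin n, (e (lo n k), e (hi n m)) ∈ M := by
    intro k
    have hkO : e (lo n k) ∈ O := (hkey _).mpr (by simpa using k.2)
    obtain ⟨p, hp, hp1⟩ := Finset.mem_image.mp hkO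
    have hp2C : p.2 ∈ C := Finset.mem_image.mpr ⟨p, hp, rfl⟩
    obtain ⟨j, hj⟩ := hrange p.2 (Finset.mem_union_right _ hp2C)
    have hjn : ¬ (j : ℕ) < n := by
      intro h
      have hjO : e j ∈ O := (hkey j).mpr h
      exact Finset.disjoint_left.mp hdisj hjO (hj ▸ hp2C)
    have hj2 := j.2
    refine ⟨⟨(j : ℕ) - n, by omega⟩, ?_⟩
    have hji : hi n ⟨(j : ℕ) - n, by omega⟩ = j := Fin.ext (show n + ((j : ℕ) - n) = (j : ℕ) by omega)
    rw [hji, hj, ← hp1]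
    simpa using hp
  choose f hf using hchoice
  have hfinj : Function.Injective f := by
    intro k k' h
    have heq : (e (lo n k), e (hi n (f k))) = (e (lo n k'), e (hi n (f k'))) :=
      hsndinj _ (hf k) _ (hf k') (by simp [h])
    have h1 := congrArg Prod.fst heq
    simp only at h1
    have h2 := hinj h1
    exact Fin.ext (show (k : ℕ) = (k' : ℕ) from congrArg (fun x : Fin (2*n) => (x : ℕ)) h2)
  refine ⟨F, Equiv.ofBijective f (Finite.injective_iff_bijective.mp hfinj), hE, hFsub, hFc, ?_⟩
  apply Finset.eq_of_subset_of_card_le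
  · intro p hp
    obtain ⟨k, rfl⟩ := mem_mkM.mp hp
    exact hf k
  · rw [hMc, card_mkM]


lemma E_card {n l : ℕ} {F : Finset ℕ} (hF : F ⊆ Finset.Icc 2 (2*n+l-1)) (hFc : F.card = l) :
    (Finset.Icc 1 (2*n+l) \ F).card = 2*n := by
  have hsub : F ⊆ Finset.Icc 1 (2*n+l) := hF.trans (Finset.Icc_subset_Icc (by omega) (by omega))
  rw [Finset.card_sdiff_of_subset hsub, Nat.card_Icc, hFc]
  have : F.card ≤ (Finset.Icc 2 (2*n+l-1)).card := Finset.card_le_card hF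
  rw [Nat.card_Icc, hFc] at this
  omega

lemma mkM_inj {n l : ℕ} {F1 F2 : Finset ℕ}
    (h1 : F1 ⊆ Finset.Icc 1 (2*n+l)) (h2 : F2 ⊆ Finset.Icc 1 (2*n+l))
    {hE1 : (Finset.Icc 1 (2*n+l) \ F1).card = 2*n}
    {hE2 : (Finset.Icc 1 (2*n+l) \ F2).card = 2*n}
    {σ1 σ2 : Equiv.Perm (Fin n)}
    (h : mkM n _ hE1 σ1 = mkM n _ hE2 σ2) : F1 = F2 ∧ σ1 = σ2 := by
  have hF : F1 = F2 := by
    have e1 := endpoints_mkM hE1 σ1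
    have e2 := endpoints_mkM hE2 σ2
    have hEE : Finset.Icc 1 (2*n+l) \ F1 = Finset.Icc 1 (2*n+l) \ F2 := by
      rw [← e1, ← e2, h]
    have k1 : Finset.Icc 1 (2*n+l) \ (Finset.Icc 1 (2*n+l) \ F1) = F1 := by
      rw [Finset.sdiff_sdiff_self_left, Finset.inter_eq_right.mpr h1]
    have k2 : Finset.Icc 1 (2*n+l) \ (Finset.Icc 1 (2*n+l) \ F2) = F2 := by
      rw [Finset.sdiff_sdiff_self_left, Finset.inter_eq_right.mpr h2]
    rw [← k1, ← k2, hEE]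
  subst hF
  refine ⟨rfl, Equiv.ext fun k => ?_⟩
  set e := (Finset.Icc 1 (2*n+l) \ F1).orderEmbOfFin hE1 with he
  have hinj : Function.Injective e := ((Finset.Icc 1 (2*n+l) \ F1).orderEmbOfFin hE1).injective
  have hk : (e (lo n k), e (hi n (σ1 k))) ∈ mkM n _ hE2 σ2 := by
    rw [← h]
    exact mem_mkM.mpr ⟨k, rfl⟩
  obtain ⟨m, hm⟩ := mem_mkM.mp hk
  have hm1 := congrArg Prod.fst hm
  have hm2 := congrArg Prod.snd hm
  simp only at hm1 hm2
  have hkm : k = m :=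
    Fin.ext (congrArg (fun x : Fin (2*n) => (x : ℕ)) (hinj hm1))
  subst hkm
  have h3 := congrArg (fun x : Fin (2*n) => (x : ℕ)) (hinj hm2)
  simp only [hi_val] at h3
  exact Fin.ext (by omega)

end Stmt6Aux

open Stmt6Aux in
theorem stmt6 (n l : ℕ) (hn : 1 ≤ n) :
    Nat.card {M : Finset (ℕ × ℕ) // IsPartialMatching (2 * n + l) M ∧
      M.card = n ∧
      (∀ p ∈ M, ∀ q ∈ M, p.1 < q.2) ∧
      1 ∈ Endpoints M ∧ (2 * n + l) ∈ Endpoints M} =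
    n.factorial * (2 * n - 2 + l).choose l := by
  classical
  set S : Finset (Finset (ℕ × ℕ)) :=
    ((Finset.Icc 1 (2*n+l)) ×ˢ (Finset.Icc 1 (2*n+l))).powerset.filter
      (fun M => IsPartialMatching (2 * n + l) M ∧ M.card = n ∧
        (∀ p ∈ M, ∀ q ∈ M, p.1 < q.2) ∧
        1 ∈ Endpoints M ∧ (2 * n + l) ∈ Endpoints M) with hS
  have hPS : ∀ M : Finset (ℕ × ℕ),
      (IsPartialMatching (2 * n + l) M ∧ M.card = n ∧
        (∀ p ∈ M, ∀ q ∈ M, p.1 < q.2) ∧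
        1 ∈ Endpoints M ∧ (2 * n + l) ∈ Endpoints M) ↔ M ∈ S := by
    intro M
    rw [hS, Finset.mem_filter, Finset.mem_powerset]
    constructor
    · intro h
      refine ⟨?_, h⟩
      intro p hp
      have h2 := h.1.1 p hp
      exact Finset.mem_product.mpr
        ⟨Finset.mem_Icc.mpr ⟨h2.1, by omega⟩, Finset.mem_Icc.mpr ⟨by omega, h2.2.2⟩⟩
    · exact fun h => h.2
  rw [Nat.card_congr (Equiv.subtypeEquivRight hPS), Nat.card_eq_fintype_card,
    Fintype.card_coe]
  set T := ((Finset.Icc 2 (2*n+l-1)).powersetCard l) ×ˢ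
    (Finset.univ : Finset (Equiv.Perm (Fin n))) with hT
  have hbij : T.card = S.card := by
    apply Finset.card_bij (fun a ha => mkM n (Finset.Icc 1 (2*n+l) \ a.1)
      (E_card (Finset.mem_powersetCard.mp (Finset.mem_product.mp ha).1).1
        (Finset.mem_powersetCard.mp (Finset.mem_product.mp ha).1).2) a.2)
    · intro a ha
      have h1 := Finset.mem_powersetCard.mp (Finset.mem_product.mp ha).1
      exact (hPS _).mp (mkM_spec hn h1.1 h1.2 (E_card h1.1 h1.2) a.2)
    · intro a1 ha1 a2 ha2 h
      have h1 := Finset.mem_powersetCard.mp (Finset.mem_product.mp ha1).1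
      have h2 := Finset.mem_powersetCard.mp (Finset.mem_product.mp ha2).1
      have hsub1 : a1.1 ⊆ Finset.Icc 1 (2*n+l) :=
        h1.1.trans (Finset.Icc_subset_Icc (by omega) (by omega))
      have hsub2 : a2.1 ⊆ Finset.Icc 1 (2*n+l) :=
        h2.1.trans (Finset.Icc_subset_Icc (by omega) (by omega))
      obtain ⟨hF, hσ⟩ := mkM_inj hsub1 hsub2 h
      exact Prod.ext hF hσ
    · intro b hb
      obtain ⟨hM1, hMc, hOC, h1e, hNe⟩ := (hPS b).mpr hb
      obtain ⟨F, σ, hE, hFsub, hFc, hmk⟩ := exists_rep hn hM1 hMc hOC h1e hNe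
      refine ⟨(F, σ), Finset.mem_product.mpr
        ⟨Finset.mem_powersetCard.mpr ⟨hFsub, hFc⟩, Finset.mem_univ _⟩, ?_⟩
      exact hmk
  rw [← hbij, hT, Finset.card_product, Finset.card_powersetCard, Nat.card_Icc,
    Finset.card_univ, Fintype.card_perm, Fintype.card_fin]
  rw [show 2*n+l-1+1-2 = 2*n-2+l by omega, Nat.mul_comm]
end

section
/- For all integers n, k, j ≥ 1 and l ≥ 0, the number of partial matchings of [2(n+k+j)+l] with exactly n+k+j arcs (hence l fixed points) such that vertices 1 and 2(n+k+j)+l are arc endpoints and the arc endpoints, listed in increasing order, consist of n+k openers, then k closers, then j openers, then n+j closers (Type OCOC with l interior fixed points) equals n! · binom(n+k, k) · k! · binom(n+j, j) · j! · binom(2(n+k+j−1)+l, l). -/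
/-- The (1-based) rank of `i` inside the finite set `E`. -/
def rankIn (E : Finset ℕ) (i : ℕ) : ℕ := (E.filter fun x => x ≤ i).card


open Finset

section Rank

variable {E : Finset ℕ} {s : ℕ} (hE : E.card = s)

noncomputable def unrk (E : Finset ℕ) (hE : E.card = s) (r : Fin s) : ℕ :=
  (E.orderIsoOfFin hE r : ℕ)

lemma unrk_mem (r : Fin s) : unrk E hE r ∈ E := (E.orderIsoOfFin hE r).2

lemma unrk_strictMono : StrictMono (unrk E hE) := fun a b h => by
  simpa [unrk] using (E.orderIsoOfFin hE).strictMono h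

lemma unrk_lt_iff {a b : Fin s} : unrk E hE a < unrk E hE b ↔ a < b :=
  (unrk_strictMono hE).lt_iff_lt

lemma unrk_le_iff {a b : Fin s} : unrk E hE a ≤ unrk E hE b ↔ a ≤ b :=
  (unrk_strictMono hE).le_iff_le

lemma unrk_inj {a b : Fin s} (h : unrk E hE a = unrk E hE b) : a = b :=
  (unrk_strictMono hE).injective h

lemma unrk_surj {e : ℕ} (he : e ∈ E) : ∃ r, unrk E hE r = e := by
  obtain ⟨r, hr⟩ := (E.orderIsoOfFin hE).surjective ⟨e, he⟩
  exact ⟨r, by simp [unrk, hr]⟩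

lemma rankIn_unrk (r : Fin s) : rankIn E (unrk E hE r) = r + 1 := by
  have himg : E.filter (fun x => x ≤ unrk E hE r)
      = (Finset.Iic r).image (unrk E hE) := by
    ext x
    simp only [mem_filter, mem_image, mem_Iic]
    constructor
    · rintro ⟨hx, hle⟩
      obtain ⟨a, ha⟩ := unrk_surj hE hx
      exact ⟨a, by rw [← ha] at hle; exact (unrk_le_iff hE).1 hle, ha⟩
    · rintro ⟨a, ha, rfl⟩
      exact ⟨unrk_mem hE a, (unrk_le_iff hE).2 ha⟩
  rw [rankIn, himg, Finset.card_image_of_injective _ (unrk_strictMono hE).injective,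
    Fin.card_Iic]

end Rank

section Struct

variable {n k j : ℕ}

/-- 0-based opener positions -/
def opP (n k j r : ℕ) : Prop := r < n+k ∨ (n+2*k ≤ r ∧ r < n+2*k+j)

def clr (n k j : ℕ) : Fin k ⊕ Fin (n+j) → Fin (2*(n+k+j))
  | .inl i => ⟨n+k+i.1, by have := i.2; omega⟩
  | .inr i => ⟨n+2*k+j+i.1, by have := i.2; omega⟩

def opv (n k j : ℕ) (f : Fin k ↪ Fin (n+k)) :
    ({x : Fin (n+k) // x ∉ Set.range f} ⊕ Fin j) → Fin (2*(n+k+j))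
  | .inl x => ⟨x.1.1, by have := x.1.2; omega⟩
  | .inr t => ⟨n+2*k+t.1, by have := t.2; omega⟩

def opr (f : Fin k ↪ Fin (n+k))
    (σ : Fin (n+j) ≃ ({x : Fin (n+k) // x ∉ Set.range f} ⊕ Fin j)) :
    Fin k ⊕ Fin (n+j) → Fin (2*(n+k+j))
  | .inl i => ⟨(f i).1, by have := (f i).2; omega⟩
  | .inr i => opv n k j f (σ i)

variable {f : Fin k ↪ Fin (n+k)}
  {σ : Fin (n+j) ≃ ({x : Fin (n+k) // x ∉ Set.range f} ⊕ Fin j)}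

lemma clr_inj : Function.Injective (clr n k j) := by
  rintro (a | a) (b | b) h <;> simp only [clr, Fin.mk.injEq] at h <;>
    first
      | (congr 1; exact Fin.ext (by omega))
      | (exfalso; have := a.2; have := b.2; omega)

lemma clr_not_opP (i : Fin k ⊕ Fin (n+j)) : ¬ opP n k j (clr n k j i).1 := by
  rcases i with i | i <;> have := i.2 <;> simp only [clr, opP] <;> omega

lemma opr_opP (i : Fin k ⊕ Fin (n+j)) : opP n k j (opr f σ i).1 := by
  rcases i with i | i
  · have := (f i).2; simp only [opr, opP]; omega
  · show opP n k j (opv n k j f (σ i)).1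
    rcases σ i with x | t
    · have := x.1.2; simp only [opv, opP]; omega
    · have := t.2; simp only [opv, opP]; omega

lemma opr_ne_clr (i i' : Fin k ⊕ Fin (n+j)) : opr f σ i ≠ clr n k j i' := by
  intro h
  exact clr_not_opP i' (h ▸ opr_opP (f := f) (σ := σ) i)

lemma opv_inj : Function.Injective (opv n k j f) := by
  rintro (a | a) (b | b) h <;> simp only [opv, Fin.mk.injEq] at h
  · congr 1; exact Subtype.ext (Fin.ext h)
  · exfalso; have h2 := a.1.isLt; omega
  · exfalso; have h2 := b.1.isLt; omega
  · congr 1; exact Fin.ext (by omega)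

lemma opv_ne_inl_range (x : {x : Fin (n+k) // x ∉ Set.range f}) (i : Fin k) :
    (opv n k j f (.inl x)).1 ≠ (f i).1 := by
  intro h
  exact x.2 ⟨i, Fin.ext h.symm⟩

lemma opr_inj : Function.Injective (opr f σ) := by
  rintro (a | a) (b | b) h
  · simp only [opr, Fin.mk.injEq] at h
    congr 1; exact f.injective (Fin.ext h)
  · exfalso
    rcases hb : σ b with x | t
    · have h2 : (opr f σ (.inr b)) = opv n k j f (.inl x) := by simp [opr, hb]
      rw [h2] at h
      exact opv_ne_inl_range x a (by rw [← h]; rfl)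
    · have h2 : (opr f σ (.inr b)) = opv n k j f (.inr t) := by simp [opr, hb]
      rw [h2] at h
      have h3 := (f a).2
      have := congrArg Fin.val h
      simp only [opr, opv] at this
      omega
  · exfalso
    rcases ha : σ a with x | t
    · have h2 : (opr f σ (.inr a)) = opv n k j f (.inl x) := by simp [opr, ha]
      rw [h2] at h
      exact opv_ne_inl_range x b (by rw [h]; rfl)
    · have h2 : (opr f σ (.inr a)) = opv n k j f (.inr t) := by simp [opr, ha]
      rw [h2] at h
      have h3 := (f b).2
      have := congrArg Fin.val h
      simp only [opr, opv] at this
      omega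
  · have h2 : opv n k j f (σ a) = opv n k j f (σ b) := h
    congr 1
    exact σ.injective (opv_inj h2)

lemma opr_lt_clr (i : Fin k ⊕ Fin (n+j)) : (opr f σ i).1 < (clr n k j i).1 := by
  rcases i with i | i
  · have := (f i).2; simp only [opr, clr]; omega
  · have h2 : (opr f σ (.inr i)).1 = (opv n k j f (σ i)).1 := rfl
    rw [h2]
    rcases σ i with x | t
    · have := x.1.2; simp only [opv, clr]; omega
    · have := t.2; simp only [opv, clr]; omega

lemma opr_clr_surj (r : Fin (2*(n+k+j))) :
    (∃ i, opr f σ i = r) ∨ (∃ i, clr n k j i = r) := by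
  have hr := r.2
  by_cases h1 : r.1 < n+k
  · left
    set x : Fin (n+k) := ⟨r.1, h1⟩ with hx
    by_cases hxr : x ∈ Set.range f
    · obtain ⟨i, hi⟩ := hxr
      exact ⟨.inl i, Fin.ext (by simp [opr, hi, hx])⟩
    · obtain ⟨i, hi⟩ := σ.surjective (.inl ⟨x, hxr⟩)
      refine ⟨.inr i, ?_⟩
      have : opr f σ (.inr i) = opv n k j f (.inl ⟨x, hxr⟩) := by simp [opr, hi]
      rw [this]; exact Fin.ext rfl
  · by_cases h2 : r.1 < n+2*k
    · exact Or.inr ⟨.inl ⟨r.1-(n+k), by omega⟩, Fin.ext (by simp [clr]; omega)⟩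
    · by_cases h3 : r.1 < n+2*k+j
      · left
        obtain ⟨i, hi⟩ := σ.surjective (.inr ⟨r.1-(n+2*k), by omega⟩)
        refine ⟨.inr i, ?_⟩
        have : opr f σ (.inr i) = opv n k j f (.inr ⟨r.1-(n+2*k), by omega⟩) := by
          simp [opr, hi]
        rw [this]; exact Fin.ext (by simp [opv]; omega)
      · exact Or.inr ⟨.inr ⟨r.1-(n+2*k+j), by omega⟩, Fin.ext (by simp [clr]; omega)⟩

lemma opr_range_iff (r : Fin (2*(n+k+j))) :
    (∃ i, opr f σ i = r) ↔ opP n k j r.1 := by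
  constructor
  · rintro ⟨i, rfl⟩; exact opr_opP i
  · intro h
    rcases opr_clr_surj (f := f) (σ := σ) r with h1 | ⟨i, rfl⟩
    · exact h1
    · exact absurd h (clr_not_opP i)

end Struct

section Decode
variable {n k j : ℕ} {E : Finset ℕ} (hE : E.card = 2*(n+k+j))
  (f : Fin k ↪ Fin (n+k))
  (σ : Fin (n+j) ≃ ({x : Fin (n+k) // x ∉ Set.range f} ⊕ Fin j))

noncomputable def arcF (i : Fin k ⊕ Fin (n+j)) : ℕ × ℕ :=
  (unrk E hE (opr f σ i), unrk E hE (clr n k j i))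

noncomputable def decode : Finset (ℕ × ℕ) :=
  Finset.univ.image (arcF hE f σ)

lemma arcF_injective : Function.Injective (arcF hE f σ) := by
  intro a b h
  have h2 : unrk E hE (clr n k j a) = unrk E hE (clr n k j b) :=
    congrArg Prod.snd h
  exact clr_inj (unrk_inj hE h2)

lemma mem_decode {p : ℕ × ℕ} :
    p ∈ decode hE f σ ↔ ∃ i, arcF hE f σ i = p := by
  simp [decode]

lemma decode_card : (decode hE f σ).card = n+k+j := by
  rw [decode, Finset.card_image_of_injective _ (arcF_injective hE f σ)]
  simp [Fintype.card_sum]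
  omega

lemma decode_endpoints : Endpoints (decode hE f σ) = E := by
  ext e
  simp only [Endpoints, Finset.mem_union, Finset.mem_image, decode]
  constructor
  · rintro (⟨p, hp, rfl⟩ | ⟨p, hp, rfl⟩) <;>
    · simp only [Finset.mem_image, Finset.mem_univ, true_and] at hp
      obtain ⟨i, rfl⟩ := hp
      exact unrk_mem hE _
  · intro he
    obtain ⟨r, rfl⟩ := unrk_surj hE he
    rcases opr_clr_surj (f := f) (σ := σ) r with ⟨i, hi⟩ | ⟨i, hi⟩
    · left
      exact ⟨arcF hE f σ i, by simp [decode], by simp [arcF, hi]⟩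
    · right
      exact ⟨arcF hE f σ i, by simp [decode], by simp [arcF, hi]⟩

lemma decode_fst_mem {e : ℕ} :
    e ∈ (decode hE f σ).image Prod.fst ↔ ∃ r, opP n k j r.1 ∧ unrk E hE r = e := by
  simp only [Finset.mem_image, decode, Finset.mem_image, Finset.mem_univ, true_and]
  constructor
  · rintro ⟨p, ⟨i, rfl⟩, rfl⟩
    exact ⟨opr f σ i, opr_opP i, rfl⟩
  · rintro ⟨r, hr, rfl⟩
    obtain ⟨i, rfl⟩ := (opr_range_iff (f := f) (σ := σ) r).2 hr
    exact ⟨arcF hE f σ i, ⟨i, rfl⟩, rfl⟩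

lemma decode_isPartialMatching {l : ℕ} (hsub : E ⊆ Finset.Icc 1 (2*(n+k+j)+l)) :
    IsPartialMatching (2*(n+k+j)+l) (decode hE f σ) := by
  constructor
  · intro p hp
    obtain ⟨i, rfl⟩ := (mem_decode hE f σ).1 hp
    have h1 := hsub (unrk_mem hE (opr f σ i))
    have h2 := hsub (unrk_mem hE (clr n k j i))
    simp only [Finset.mem_Icc] at h1 h2
    refine ⟨h1.1, ?_, h2.2⟩
    exact (unrk_strictMono hE) (Fin.lt_def.2 (opr_lt_clr i))
  · intro p hp q hq hpq
    obtain ⟨i, rfl⟩ := (mem_decode hE f σ).1 hp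
    obtain ⟨i', rfl⟩ := (mem_decode hE f σ).1 hq
    have hii' : i ≠ i' := fun h => hpq (by rw [h])
    refine ⟨?_, ?_, ?_, ?_⟩
    · intro h
      exact hii' (opr_inj (unrk_inj hE h))
    · intro h
      exact opr_ne_clr i i' (unrk_inj hE h)
    · intro h
      exact opr_ne_clr i' i (unrk_inj hE h.symm)
    · intro h
      exact hii' (clr_inj (unrk_inj hE h))


lemma decode_pattern :
    ∀ e ∈ Endpoints (decode hE f σ), (e ∈ (decode hE f σ).image Prod.fst ↔
      (rankIn (Endpoints (decode hE f σ)) e ≤ n + k ∨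
        (n + 2*k + 1 ≤ rankIn (Endpoints (decode hE f σ)) e ∧
         rankIn (Endpoints (decode hE f σ)) e ≤ n + 2*k + j))) := by
  intro e he
  rw [decode_endpoints hE f σ] at he ⊢
  obtain ⟨r, rfl⟩ := unrk_surj hE he
  rw [rankIn_unrk hE r, decode_fst_mem hE f σ]
  have hr := r.2
  constructor
  · rintro ⟨r', hr', h⟩
    have : r' = r := unrk_inj hE h
    subst this
    unfold opP at hr'
    omega
  · intro h
    exact ⟨r, by unfold opP; omega, rfl⟩

end Decode

section Inj

variable {n k j : ℕ} {E : Finset ℕ}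

lemma decode_opr_eq (hE hE' : E.card = 2*(n+k+j)) {f f' : Fin k ↪ Fin (n+k)}
    {σ : Fin (n+j) ≃ ({x : Fin (n+k) // x ∉ Set.range f} ⊕ Fin j)}
    {σ' : Fin (n+j) ≃ ({x : Fin (n+k) // x ∉ Set.range f'} ⊕ Fin j)}
    (h : decode hE f σ = decode hE' f' σ') :
    ∀ i, opr f σ i = opr f' σ' i := by
  intro i
  have hm : arcF hE f σ i ∈ decode hE' f' σ' := by
    rw [← h]
    exact (mem_decode hE f σ).2 ⟨i, rfl⟩
  obtain ⟨i', hi'⟩ := (mem_decode hE' f' σ').1 hm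
  have h2 : unrk E hE' (clr n k j i') = unrk E hE (clr n k j i) :=
    congrArg Prod.snd hi'
  have h3 : i' = i := clr_inj (unrk_inj hE h2)
  subst h3
  have h4 : unrk E hE' (opr f' σ' i') = unrk E hE (opr f σ i') :=
    congrArg Prod.fst hi'
  exact (unrk_inj hE h4).symm

lemma decode_inj (hE hE' : E.card = 2*(n+k+j)) {f f' : Fin k ↪ Fin (n+k)}
    {σ : Fin (n+j) ≃ ({x : Fin (n+k) // x ∉ Set.range f} ⊕ Fin j)}
    {σ' : Fin (n+j) ≃ ({x : Fin (n+k) // x ∉ Set.range f'} ⊕ Fin j)}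
    (h : decode hE f σ = decode hE' f' σ') :
    (⟨f, σ⟩ : Σ g : Fin k ↪ Fin (n+k),
      (Fin (n+j) ≃ ({x : Fin (n+k) // x ∉ Set.range g} ⊕ Fin j))) = ⟨f', σ'⟩ := by
  have hop := decode_opr_eq hE hE' h
  have hf : f = f' := by
    apply DFunLike.ext
    intro i
    have := congrArg Fin.val (hop (.inl i))
    simp only [opr] at this
    exact Fin.ext this
  subst hf
  have hσ : σ = σ' := by
    apply Equiv.ext
    intro i
    have h2 : opv n k j f (σ i) = opv n k j f (σ' i) := hop (.inr i)
    exact opv_inj h2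
  rw [hσ]

end Inj

section Surj

lemma endpoints_subset {N : ℕ} {M : Finset (ℕ × ℕ)} (hpm : IsPartialMatching N M) :
    Endpoints M ⊆ Finset.Icc 1 N := by
  intro e he
  rcases Finset.mem_union.1 he with h | h <;> obtain ⟨p, hp, rfl⟩ := Finset.mem_image.1 h <;>
    have := hpm.1 p hp <;> simp only [Finset.mem_Icc] <;> omega

lemma endpoints_card {N : ℕ} {M : Finset (ℕ × ℕ)} (hpm : IsPartialMatching N M) :
    (Endpoints M).card = 2 * M.card := by
  have hfst : (M.image Prod.fst).card = M.card := by
    apply Finset.card_image_of_injOn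
    intro p hp q hq hpq
    by_contra hne
    exact (hpm.2 p hp q hq hne).1 hpq
  have hsnd : (M.image Prod.snd).card = M.card := by
    apply Finset.card_image_of_injOn
    intro p hp q hq hpq
    by_contra hne
    exact (hpm.2 p hp q hq hne).2.2.2 hpq
  have hdisj : Disjoint (M.image Prod.fst) (M.image Prod.snd) := by
    rw [Finset.disjoint_left]
    rintro e h1 h2
    obtain ⟨p, hp, rfl⟩ := Finset.mem_image.1 h1
    obtain ⟨q, hq, hq1⟩ := Finset.mem_image.1 h2
    by_cases hpq : p = q
    · subst hpq
      exact absurd hq1 (ne_of_gt (hpm.1 p hp).2.1)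
    · exact (hpm.2 p hp q hq hpq).2.1 hq1.symm
  rw [Endpoints, Finset.card_union_of_disjoint hdisj, hfst, hsnd]
  omega

lemma decode_surj {n k j l : ℕ} (M : Finset (ℕ × ℕ))
    (hpm : IsPartialMatching (2*(n+k+j)+l) M) (hcard : M.card = n+k+j)
    (hpat : ∀ i ∈ Endpoints M, (i ∈ M.image Prod.fst ↔
      (rankIn (Endpoints M) i ≤ n + k ∨
        (n + 2*k + 1 ≤ rankIn (Endpoints M) i ∧
         rankIn (Endpoints M) i ≤ n + 2*k + j)))) :
    ∃ (hE : (Endpoints M).card = 2*(n+k+j)) (f : Fin k ↪ Fin (n+k))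
      (σ : Fin (n+j) ≃ ({x : Fin (n+k) // x ∉ Set.range f} ⊕ Fin j)),
      decode hE f σ = M := by
  classical
  set E := Endpoints M with hEdef
  have hE : E.card = 2*(n+k+j) := by rw [hEdef, endpoints_card hpm, hcard]
  have fstU : ∀ p ∈ M, ∀ q ∈ M, p.1 = q.1 → p = q := by
    intro p hp q hq h
    by_contra hne
    exact (hpm.2 p hp q hq hne).1 h
  have sndU : ∀ p ∈ M, ∀ q ∈ M, p.2 = q.2 → p = q := by
    intro p hp q hq h
    by_contra hne
    exact (hpm.2 p hp q hq hne).2.2.2 h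
  have hfst : ∀ r : Fin (2*(n+k+j)), ((unrk E hE) r ∈ M.image Prod.fst ↔ opP n k j r.1) := by
    intro r
    have hmem : (unrk E hE) r ∈ E := unrk_mem hE r
    have hr2 := r.2
    rw [hpat ((unrk E hE) r) hmem, rankIn_unrk hE r]
    unfold opP
    omega
  have key : ∀ c : Fin (2*(n+k+j)), ∃ a : Fin (2*(n+k+j)), ¬ opP n k j c.1 →
      (opP n k j a.1 ∧ a.1 < c.1 ∧ ((unrk E hE) a, (unrk E hE) c) ∈ M) := by
    intro c
    by_cases hc : opP n k j c.1
    · exact ⟨c, fun h => absurd hc h⟩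
    · have hmem : (unrk E hE) c ∈ E := unrk_mem hE c
      have hsnd : (unrk E hE) c ∈ M.image Prod.snd := by
        have hnot : (unrk E hE) c ∉ M.image Prod.fst := fun h => hc ((hfst c).1 h)
        have hmem' : (unrk E hE) c ∈ M.image Prod.fst ∪ M.image Prod.snd := hmem
        rcases Finset.mem_union.1 hmem' with h | h
        · exact absurd h hnot
        · exact h
      obtain ⟨p, hp, hp2⟩ := Finset.mem_image.1 hsnd
      have hp1E : p.1 ∈ E := Finset.mem_union_left _ (Finset.mem_image_of_mem _ hp)
      obtain ⟨a, ha⟩ := unrk_surj hE hp1E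
      have haop : opP n k j a.1 :=
        (hfst a).1 (by rw [ha]; exact Finset.mem_image_of_mem _ hp)
      have halt : a.1 < c.1 := by
        have h1 : (unrk E hE) a < (unrk E hE) c := by
          rw [ha, ← hp2]; exact (hpm.1 p hp).2.1
        exact (unrk_strictMono hE).lt_iff_lt.1 h1
      refine ⟨a, fun _ => ⟨haop, halt, ?_⟩⟩
      rw [ha, ← hp2]
      exact hp
  choose A hA using key
  have hAvalk : ∀ i : Fin k, (A (clr n k j (.inl i))).1 < n+k := by
    intro i
    obtain ⟨hop, hlt, _⟩ := hA _ (clr_not_opP (n := n) (k := k) (j := j) (.inl i))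
    have hcval : (clr n k j (Sum.inl i)).1 = n+k+i.1 := rfl
    have hi2 := i.2
    unfold opP at hop
    omega
  have hAinj : ∀ c c' : Fin (2*(n+k+j)), ¬opP n k j c.1 → ¬opP n k j c'.1 →
      (A c).1 = (A c').1 → c = c' := by
    intro c c' hc hc' h
    have h1 : A c = A c' := Fin.ext h
    have h2 := fstU _ (hA c hc).2.2 _ (hA c' hc').2.2 (by rw [h1])
    exact unrk_inj hE (congrArg Prod.snd h2)
  have hFinj : Function.Injective
      (fun i : Fin k => (⟨(A (clr n k j (.inl i))).1, hAvalk i⟩ : Fin (n+k))) := by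
    intro a b hab
    have h1 : (A (clr n k j (.inl a))).1 = (A (clr n k j (.inl b))).1 := by
      have := congrArg Fin.val hab
      simpa using this
    have h2 := hAinj _ _ (clr_not_opP _) (clr_not_opP _) h1
    exact Sum.inl.inj (clr_inj h2)
  set f : Fin k ↪ Fin (n+k) :=
    ⟨fun i => ⟨(A (clr n k j (.inl i))).1, hAvalk i⟩, hFinj⟩ with hf
  have hGop : ∀ i : Fin (n+j), opP n k j (A (clr n k j (.inr i))).1 :=
    fun i => (hA _ (clr_not_opP _)).1
  have hnotrange : ∀ (i : Fin (n+j)) (h : (A (clr n k j (.inr i))).1 < n+k),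
      (⟨(A (clr n k j (.inr i))).1, h⟩ : Fin (n+k)) ∉ Set.range f := by
    rintro i h ⟨i0, hi0⟩
    have hval : (A (clr n k j (.inl i0))).1 = (A (clr n k j (.inr i))).1 := by
      have := congrArg Fin.val hi0
      exact this
    have h2 := hAinj _ _ (clr_not_opP _) (clr_not_opP _) hval
    exact (by simp : (Sum.inl i0 : Fin k ⊕ Fin (n+j)) ≠ .inr i) (clr_inj h2)
  set G : Fin (n+j) → ({x : Fin (n+k) // x ∉ Set.range f} ⊕ Fin j) := fun i =>
    if h : (A (clr n k j (.inr i))).1 < n+k then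
      .inl ⟨⟨(A (clr n k j (.inr i))).1, h⟩, hnotrange i h⟩
    else
      .inr ⟨(A (clr n k j (.inr i))).1 - (n+2*k), by
        have := hGop i; unfold opP at this; omega⟩ with hG
  have hGval : ∀ i, (opv n k j f (G i)).1 = (A (clr n k j (.inr i))).1 := by
    intro i
    by_cases h : (A (clr n k j (.inr i))).1 < n+k
    · simp only [hG, dif_pos h]
      rfl
    · simp only [hG, dif_neg h]
      have := hGop i
      unfold opP at this
      show n+2*k + ((A (clr n k j (.inr i))).1 - (n+2*k)) = _
      omega
  have hGinj : Function.Injective G := by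
    intro a b hab
    have h : (A (clr n k j (.inr a))).1 = (A (clr n k j (.inr b))).1 := by
      rw [← hGval a, ← hGval b, hab]
    have h2 := hAinj _ _ (clr_not_opP _) (clr_not_opP _) h
    exact Sum.inr.inj (clr_inj h2)
  have hGbij : Function.Bijective G := by
    rw [Fintype.bijective_iff_injective_and_card]
    refine ⟨hGinj, ?_⟩
    rw [Fintype.card_sum, Fintype.card_subtype_compl,
      Set.card_range_of_injective f.injective]
    simp
  refine ⟨hE, f, Equiv.ofBijective G hGbij, ?_⟩
  have hopA : ∀ i, opr f (Equiv.ofBijective G hGbij) i = A (clr n k j i) := by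
    rintro (i | i)
    · exact Fin.ext rfl
    · exact Fin.ext (hGval i)
  have harc : ∀ i, arcF hE f (Equiv.ofBijective G hGbij) i
      = ((unrk E hE) (A (clr n k j i)), (unrk E hE) (clr n k j i)) := by
    intro i
    rw [arcF, hopA i]
  apply Finset.Subset.antisymm
  · intro p hp
    obtain ⟨i, rfl⟩ := (mem_decode hE f _).1 hp
    rw [harc i]
    exact (hA _ (clr_not_opP i)).2.2
  · intro p hp
    have hp2E : p.2 ∈ E := Finset.mem_union_right _ (Finset.mem_image_of_mem _ hp)
    obtain ⟨c, hc⟩ := unrk_surj hE hp2E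
    have hnotfst : p.2 ∉ M.image Prod.fst := by
      intro h
      obtain ⟨q, hq, hq1⟩ := Finset.mem_image.1 h
      by_cases hpq : q = p
      · have h2 : q.1 = q.2 := by rw [hq1, hpq]
        exact absurd h2 (ne_of_lt (hpm.1 q hq).2.1)
      · exact (hpm.2 q hq p hp hpq).2.1 hq1
    have hcop : ¬ opP n k j c.1 := fun h => hnotfst (hc ▸ (hfst c).2 h)
    obtain ⟨i, hi⟩ : ∃ i, clr n k j i = c := by
      rcases opr_clr_surj (f := f) (σ := Equiv.ofBijective G hGbij) c with ⟨i, hi⟩ | h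
      · exact absurd (hi ▸ opr_opP i) hcop
      · exact h
    have hpeq : p = ((unrk E hE) (A c), (unrk E hE) c) :=
      sndU p hp _ (hA c hcop).2.2 hc.symm
    rw [mem_decode]
    exact ⟨i, by rw [harc i, hi, ← hpeq]⟩

end Surj

lemma cardSigma (n k j : ℕ) :
    Nat.card (Σ f : Fin k ↪ Fin (n+k),
      (Fin (n+j) ≃ ({x : Fin (n+k) // x ∉ Set.range f} ⊕ Fin j))) =
    (n+k).descFactorial k * (n+j).factorial := by
  classical
  rw [Nat.card_eq_fintype_card, Fintype.card_sigma]
  have hcard : ∀ f : Fin k ↪ Fin (n+k),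
      Fintype.card ({x : Fin (n+k) // x ∉ Set.range f} ⊕ Fin j) = n + j := by
    intro f
    rw [Fintype.card_sum, Fintype.card_subtype_compl, Set.card_range_of_injective f.injective]
    simp
  have hsummand : ∀ f : Fin k ↪ Fin (n+k),
      Fintype.card (Fin (n+j) ≃ ({x : Fin (n+k) // x ∉ Set.range f} ⊕ Fin j))
        = (n+j).factorial := by
    intro f
    have e : Fin (n+j) ≃ ({x : Fin (n+k) // x ∉ Set.range f} ⊕ Fin j) :=
      Fintype.equivOfCardEq (by rw [hcard f]; simp)
    rw [Fintype.card_equiv e, Fintype.card_fin]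
  simp only [hsummand]
  rw [Finset.sum_const, smul_eq_mul, Finset.card_univ, Fintype.card_embedding_eq]
  simp

lemma cardS (N m l : ℕ) (hm : 1 ≤ m) (hN : N = 2*m + l) :
    Nat.card {E : Finset ℕ // E ⊆ Finset.Icc 1 N ∧ E.card = 2*m ∧ 1 ∈ E ∧ N ∈ E} =
    (2*(m-1) + l).choose l := by
  classical
  have hN2 : 2 ≤ N := by omega
  have hIccsub : Finset.Icc 2 (N-1) ⊆ Finset.Icc 1 N := by
    intro x hx; simp only [mem_Icc] at *; omega
  set g : {E : Finset ℕ // E ⊆ Finset.Icc 1 N ∧ E.card = 2*m ∧ 1 ∈ E ∧ N ∈ E} →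
      {F : Finset ℕ // F ∈ (Finset.Icc 2 (N-1)).powersetCard l} :=
    fun E => ⟨Finset.Icc 1 N \ E.1, by
      obtain ⟨h1, h2, h3, h4⟩ := E.2
      rw [Finset.mem_powersetCard]
      constructor
      · intro x hx
        simp only [Finset.mem_sdiff, mem_Icc] at hx ⊢
        constructor
        · rcases Nat.lt_or_ge x 2 with h | h
          · exfalso; have : x = 1 := by omega
            exact hx.2 (this ▸ h3)
          · exact h
        · rcases Nat.lt_or_ge x (N-1+1) with h | h
          · omega
          · exfalso; have : x = N := by omega
            exact hx.2 (this ▸ h4)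
      · rw [Finset.card_sdiff_of_subset h1, Nat.card_Icc, h2]; omega⟩
  have hbij : Function.Bijective g := by
    constructor
    · rintro ⟨E, hE⟩ ⟨E', hE'⟩ h
      simp only [g, Subtype.mk.injEq] at h
      have := congrArg (fun F => Finset.Icc 1 N \ F) h
      simp only [Finset.sdiff_sdiff_eq_self hE.1, Finset.sdiff_sdiff_eq_self hE'.1] at this
      exact Subtype.ext this
    · rintro ⟨F, hF⟩
      rw [Finset.mem_powersetCard] at hF
      have hFsub : F ⊆ Finset.Icc 1 N := hF.1.trans hIccsub
      refine ⟨⟨Finset.Icc 1 N \ F, ?_, ?_, ?_, ?_⟩, ?_⟩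
      · exact Finset.sdiff_subset
      · rw [Finset.card_sdiff_of_subset hFsub, Nat.card_Icc, hF.2]; omega
      · simp only [Finset.mem_sdiff, mem_Icc]
        refine ⟨⟨le_refl 1, by omega⟩, fun h => ?_⟩
        have := hF.1 h; simp only [mem_Icc] at this; omega
      · simp only [Finset.mem_sdiff, mem_Icc]
        refine ⟨⟨by omega, le_refl N⟩, fun h => ?_⟩
        have := hF.1 h; simp only [mem_Icc] at this; omega
      · simp only [g, Subtype.mk.injEq]
        exact Finset.sdiff_sdiff_eq_self hFsub
  rw [Nat.card_eq_of_bijective g hbij, Nat.card_eq_fintype_card, Fintype.card_coe,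
    Finset.card_powersetCard, Nat.card_Icc]
  congr 1
  omega

theorem stmt7 (n k j l : ℕ) (hn : 1 ≤ n) (hk : 1 ≤ k) (hj : 1 ≤ j) :
    Nat.card {M : Finset (ℕ × ℕ) //
      IsPartialMatching (2 * (n + k + j) + l) M ∧
      M.card = n + k + j ∧
      1 ∈ Endpoints M ∧ (2 * (n + k + j) + l) ∈ Endpoints M ∧
      ∀ i ∈ Endpoints M, (i ∈ M.image Prod.fst ↔
        (rankIn (Endpoints M) i ≤ n + k ∨
          (n + 2 * k + 1 ≤ rankIn (Endpoints M) i ∧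
            rankIn (Endpoints M) i ≤ n + 2 * k + j)))} =
    n.factorial * ((n + k).choose k) * k.factorial * ((n + j).choose j) * j.factorial *
      ((2 * (n + k + j - 1) + l).choose l) := by
  classical
  set N := 2 * (n + k + j) + l with hN
  have hD : ∀ p : ({E : Finset ℕ // E ⊆ Finset.Icc 1 N ∧ E.card = 2*(n+k+j) ∧ 1 ∈ E ∧ N ∈ E} ×
      Σ f : Fin k ↪ Fin (n+k), (Fin (n+j) ≃ ({x : Fin (n+k) // x ∉ Set.range f} ⊕ Fin j))),
      IsPartialMatching (2 * (n + k + j) + l) (decode p.1.2.2.1 p.2.1 p.2.2) ∧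
      (decode p.1.2.2.1 p.2.1 p.2.2).card = n + k + j ∧
      1 ∈ Endpoints (decode p.1.2.2.1 p.2.1 p.2.2) ∧
      (2 * (n + k + j) + l) ∈ Endpoints (decode p.1.2.2.1 p.2.1 p.2.2) ∧
      ∀ i ∈ Endpoints (decode p.1.2.2.1 p.2.1 p.2.2),
        (i ∈ (decode p.1.2.2.1 p.2.1 p.2.2).image Prod.fst ↔
        (rankIn (Endpoints (decode p.1.2.2.1 p.2.1 p.2.2)) i ≤ n + k ∨
          (n + 2 * k + 1 ≤ rankIn (Endpoints (decode p.1.2.2.1 p.2.1 p.2.2)) i ∧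
            rankIn (Endpoints (decode p.1.2.2.1 p.2.1 p.2.2)) i ≤ n + 2 * k + j))) := by
    rintro ⟨⟨E, hsub, hE, h1, hNmem⟩, ⟨f, σ⟩⟩
    refine ⟨decode_isPartialMatching hE f σ hsub, decode_card hE f σ, ?_, ?_,
      decode_pattern hE f σ⟩
    · rw [decode_endpoints hE f σ]; exact h1
    · rw [decode_endpoints hE f σ]; exact hNmem
  set D : ({E : Finset ℕ // E ⊆ Finset.Icc 1 N ∧ E.card = 2*(n+k+j) ∧ 1 ∈ E ∧ N ∈ E} ×
      Σ f : Fin k ↪ Fin (n+k), (Fin (n+j) ≃ ({x : Fin (n+k) // x ∉ Set.range f} ⊕ Fin j))) →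
      {M : Finset (ℕ × ℕ) //
      IsPartialMatching (2 * (n + k + j) + l) M ∧
      M.card = n + k + j ∧
      1 ∈ Endpoints M ∧ (2 * (n + k + j) + l) ∈ Endpoints M ∧
      ∀ i ∈ Endpoints M, (i ∈ M.image Prod.fst ↔
        (rankIn (Endpoints M) i ≤ n + k ∨
          (n + 2 * k + 1 ≤ rankIn (Endpoints M) i ∧
            rankIn (Endpoints M) i ≤ n + 2 * k + j)))} :=
    fun p => ⟨decode p.1.2.2.1 p.2.1 p.2.2, hD p⟩ with hDdef
  have hbij : Function.Bijective D := by
    constructor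
    · rintro ⟨⟨E, hsub, hE, h1, hNm⟩, ⟨f, σ⟩⟩ ⟨⟨E', hsub', hE', h1', hNm'⟩, ⟨f', σ'⟩⟩ h
      simp only [hDdef, Subtype.mk.injEq] at h
      have hEE : E = E' := by
        rw [← decode_endpoints hE f σ, ← decode_endpoints hE' f' σ', h]
      subst hEE
      have hsig := decode_inj hE hE' h
      simp only [Prod.mk.injEq, Subtype.mk.injEq]
      exact ⟨trivial, hsig⟩
    · rintro ⟨M, hpm, hcard, h1, hNm, hpat⟩
      obtain ⟨hE, f, σ, hdec⟩ := decode_surj M hpm hcard hpat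
      refine ⟨⟨⟨Endpoints M, endpoints_subset hpm, hE, h1, hNm⟩, ⟨f, σ⟩⟩, ?_⟩
      simp only [hDdef]
      exact Subtype.ext hdec
  rw [← Nat.card_eq_of_bijective D hbij, Nat.card_prod,
    cardS N (n+k+j) l (by omega) hN, cardSigma n k j]
  rw [Nat.descFactorial_eq_factorial_mul_choose,
    ← Nat.add_choose_mul_factorial_mul_factorial n j]
  ring_nf
end
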